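/- arXiv:2008.00050 — 8 statements merged into one kernel-verified Lean document; each statement's English description precedes it below -/
import Mathlib

section
/- Let n ≥ 1, let a₁,…,aₙ be positive even integers and e₁,…,eₙ ∈ {±1}, and let σ = M(a₁,e₁)···M(aₙ,eₙ), where M(a,e) is the matrix (a,e;1,0). Suppose ω > 1 is an irrational real number fixed by the Möbius action of σ. Then ω is a quadratic irrational, its conjugate satisfies ω* ∈ (−1,1), and −ω* is a fixed point of the Möbius action of the matrix N = (0,eₙ;1,aₙ)·(0,e_{n−1};1,a_{n−1})···(0,e₁;1,a₁). (This is the ECF analogue of the Galois formula: −ω* equals the dual ECF value ⟨⟨(aₙ,eₙ),…,(a₁,e₁)⟩⟩ with the periodic block reversed.) -/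
noncomputable section

/-- `ω'` is the conjugate of the quadratic irrational `ω`: both are roots of the
minimal integer polynomial `A X^2 + B X + C` of `ω` (with `A > 0`, `gcd(A,B,C) = 1`),
and `ω' ≠ ω`. -/
def IsConjPair (ω ω' : ℝ) : Prop :=
  Irrational ω ∧ ∃ A B C : ℤ, 0 < A ∧ Int.gcd (Int.gcd A B : ℤ) C = 1 ∧
    (A : ℝ) * ω ^ 2 + B * ω + C = 0 ∧ (A : ℝ) * ω' ^ 2 + B * ω' + C = 0 ∧ ω' ≠ ω

/-- The quadratic irrational `ω` has discriminant `Δ = B^2 - 4AC`, where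
`A X^2 + B X + C` is its minimal integer polynomial (`A > 0`, `gcd(A,B,C) = 1`). -/
def HasDisc (ω : ℝ) (Δ : ℤ) : Prop :=
  Irrational ω ∧ ∃ A B C : ℤ, 0 < A ∧ Int.gcd (Int.gcd A B : ℤ) C = 1 ∧
    (A : ℝ) * ω ^ 2 + B * ω + C = 0 ∧ Δ = B ^ 2 - 4 * A * C

/-- The matrix `M(a,e) = (a, e; 1, 0)`. -/
def Mmat (a e : ℤ) : Matrix (Fin 2) (Fin 2) ℤ := !![a, e; 1, 0]

/-- Möbius action of an integer matrix `(a, b; c, d)` on a real number: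
`x ↦ (a x + b) / (c x + d)`. -/
def moebius (m : Matrix (Fin 2) (Fin 2) ℤ) (x : ℝ) : ℝ :=
  ((m 0 0 : ℝ) * x + m 0 1) / ((m 1 0 : ℝ) * x + m 1 1)

/-! ### Auxiliary machinery -/

open Matrix

abbrev M2' := Matrix (Fin 2) (Fin 2) ℤ

def Smat : M2' := !![0,1;1,0]

def Tflip (m : M2') : M2' := Smat * mᵀ * Smat

lemma Smat_sq : Smat * Smat = 1 := by
  ext i j; fin_cases i <;> fin_cases j <;> simp [Smat, Matrix.mul_apply, Fin.sum_univ_two]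

lemma Tflip_one : Tflip 1 = 1 := by
  simp [Tflip, Smat_sq]

lemma Tflip_mul (x y : M2') : Tflip (x * y) = Tflip y * Tflip x := by
  simp only [Tflip, Matrix.transpose_mul]
  rw [show Smat * yᵀ * Smat * (Smat * xᵀ * Smat) = Smat * yᵀ * (Smat * Smat) * xᵀ * Smat by
    noncomm_ring, Smat_sq]
  noncomm_ring

lemma Tflip_eq (m : M2') : Tflip m = !![m 1 1, m 0 1; m 1 0, m 0 0] := by
  ext i j; fin_cases i <;> fin_cases j <;>
    simp [Tflip, Smat, Matrix.mul_apply, Matrix.vecMul, dotProduct, Fin.sum_univ_two]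

lemma Tflip_Mmat (a e : ℤ) : Tflip (Mmat a e) = !![0, e; 1, a] := by
  rw [Tflip_eq]
  simp [Mmat]

lemma rev_prod (l : List M2') : (l.reverse.map Tflip).prod = Tflip l.prod := by
  induction l with
  | nil => simpa using Tflip_one.symm
  | cons x l ih => rw [List.reverse_cons, List.map_append, List.prod_append,
      List.prod_cons, Tflip_mul, ih]; simp

/-- The inductive invariant on products of matrices `M(aᵢ,eᵢ)`. -/
def Qinv (m : M2') : Prop :=
  1 ≤ m 1 0 ∧ 1 ≤ m 1 0 + m 1 1 ∧ m 1 1 + 1 ≤ m 1 0 ∧ m 1 0 ≤ m 0 0 ∧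
    m 1 0 + m 1 1 ≤ m 0 0 + m 0 1 ∧ m 0 1 + m 1 0 ≤ m 0 0 + m 1 1

lemma Qinv_base {α ε : ℤ} (hα : 2 ≤ α) (hε : ε = 1 ∨ ε = -1) : Qinv (Mmat α ε) := by
  rcases hε with h | h <;> subst h <;>
    refine ⟨?_, ?_, ?_, ?_, ?_, ?_⟩ <;> simp [Mmat] <;> omega

lemma Qinv_step {m : M2'} (hm : Qinv m) {α ε : ℤ} (hα : 2 ≤ α) (hε : ε = 1 ∨ ε = -1) :
    Qinv (m * Mmat α ε) := by
  obtain ⟨h1, h2, h3, h4, h5, h6⟩ := hm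
  have e00 : (m * Mmat α ε) 0 0 = m 0 0 * α + m 0 1 := by
    simp [Mmat, Matrix.mul_apply, Fin.sum_univ_two]
  have e01 : (m * Mmat α ε) 0 1 = m 0 0 * ε := by
    simp [Mmat, Matrix.mul_apply, Fin.sum_univ_two]
  have e10 : (m * Mmat α ε) 1 0 = m 1 0 * α + m 1 1 := by
    simp [Mmat, Matrix.mul_apply, Fin.sum_univ_two]
  have e11 : (m * Mmat α ε) 1 1 = m 1 0 * ε := by
    simp [Mmat, Matrix.mul_apply, Fin.sum_univ_two]
  have key1 : 2 * m 1 0 ≤ m 1 0 * α := by nlinarith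
  have key2 : 2 * (m 0 0 - m 1 0) ≤ (m 0 0 - m 1 0) * α := by nlinarith
  rcases hε with h | h <;> subst h <;>
    refine ⟨?_, ?_, ?_, ?_, ?_, ?_⟩ <;> simp only [e00, e01, e10, e11] <;> nlinarith

lemma Qinv_prod (a e : ℕ → ℤ) : ∀ n, 1 ≤ n → (∀ i < n, 2 ≤ a i) →
    (∀ i < n, e i = 1 ∨ e i = -1) →
    Qinv (((List.range n).map (fun i => Mmat (a i) (e i))).prod) := by
  intro n
  induction n with
  | zero => omega
  | succ k ih =>
    intro _ ha he
    rcases Nat.eq_zero_or_pos k with hk | hk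
    · subst hk
      rw [List.range_succ]
      simpa using Qinv_base (ha 0 (by omega)) (he 0 (by omega))
    · rw [List.range_succ, List.map_append, List.prod_append]
      simp only [List.map_cons, List.map_nil, List.prod_cons, List.prod_nil, mul_one]
      exact Qinv_step (ih hk (fun i hi => ha i (by omega)) (fun i hi => he i (by omega)))
        (ha k (by omega)) (he k (by omega))

lemma irr_ne_div {ω : ℝ} (h : Irrational ω) (p q : ℤ) : ω ≠ (p : ℝ) / (q : ℝ) := by
  intro he
  have hcast : ((((p : ℚ) / (q : ℚ)) : ℚ) : ℝ) = (p : ℝ) / (q : ℝ) := by push_cast; ring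
  rw [he, ← hcast] at h
  exact Rat.not_irrational _ h

lemma primitive_triple (c e b : ℤ) (hc : 0 < c) :
    ∃ A B C k : ℤ, 0 < k ∧ 0 < A ∧ Int.gcd (Int.gcd A B : ℤ) C = 1 ∧
      c = k * A ∧ e = k * B ∧ b = k * C := by
  set G : ℤ := (Int.gcd (Int.gcd c e : ℤ) b : ℤ) with hG
  have hG0 : 0 < G := by
    have : Int.gcd (Int.gcd c e : ℤ) b ≠ 0 := by
      intro h
      rw [Int.gcd_eq_zero_iff] at h
      have h2 := h.1
      norm_cast at h2
      rw [Int.gcd_eq_zero_iff] at h2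
      omega
    positivity
  have hGc : G ∣ c := (Int.gcd_dvd_left (a := (Int.gcd c e : ℤ)) (b := b)).trans
    (Int.gcd_dvd_left _ _)
  have hGe : G ∣ e := (Int.gcd_dvd_left (a := (Int.gcd c e : ℤ)) (b := b)).trans
    (Int.gcd_dvd_right _ _)
  have hGb : G ∣ b := Int.gcd_dvd_right _ _
  refine ⟨c / G, e / G, b / G, G, hG0, ?_, ?_, ?_, ?_, ?_⟩
  · exact Int.ediv_pos_of_pos_of_dvd hc hG0.le hGc
  · set g : ℕ := Int.gcd (Int.gcd (c / G) (e / G) : ℤ) (b / G) with hg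
    have hgA : (g : ℤ) ∣ c / G := (Int.gcd_dvd_left _ _).trans (Int.gcd_dvd_left _ _)
    have hgB : (g : ℤ) ∣ e / G := (Int.gcd_dvd_left _ _).trans (Int.gcd_dvd_right _ _)
    have hgC : (g : ℤ) ∣ b / G := Int.gcd_dvd_right _ _
    have hdc : G * g ∣ c := by
      obtain ⟨t, ht⟩ := hgA
      exact ⟨t, by rw [mul_assoc, ← ht, Int.mul_ediv_cancel' hGc]⟩
    have hde : G * g ∣ e := by
      obtain ⟨t, ht⟩ := hgB
      exact ⟨t, by rw [mul_assoc, ← ht, Int.mul_ediv_cancel' hGe]⟩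
    have hdb : G * g ∣ b := by
      obtain ⟨t, ht⟩ := hgC
      exact ⟨t, by rw [mul_assoc, ← ht, Int.mul_ediv_cancel' hGb]⟩
    have hdG : G * g ∣ G := Int.dvd_coe_gcd (Int.dvd_coe_gcd hdc hde) hdb
    have hle : G * g ≤ G := Int.le_of_dvd hG0 hdG
    have hgne : g ≠ 0 := by
      intro h
      rw [hg] at h
      rw [Int.gcd_eq_zero_iff] at h
      have := h.1
      norm_cast at this
      rw [Int.gcd_eq_zero_iff] at this
      have : c / G = 0 := this.1
      have := Int.ediv_pos_of_pos_of_dvd hc hG0.le hGc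
      omega
    have : (g : ℤ) ≤ 1 := by nlinarith [Int.natCast_pos.mpr (Nat.pos_of_ne_zero hgne)]
    have : g = 1 := by omega
    exact_mod_cast this
  · exact (Int.mul_ediv_cancel' hGc).symm
  · exact (Int.mul_ediv_cancel' hGe).symm
  · exact (Int.mul_ediv_cancel' hGb).symm

theorem stmt7 (n : ℕ) (hn : 1 ≤ n) (a e : ℕ → ℤ)
    (ha : ∀ i < n, 0 < a i ∧ Even (a i)) (he : ∀ i < n, e i = 1 ∨ e i = -1)
    (ω : ℝ) (hω : 1 < ω) (hirr : Irrational ω)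
    (hfix : moebius (((List.range n).map (fun i => Mmat (a i) (e i))).prod) ω = ω) :
    ∃ ωs : ℝ, IsConjPair ω ωs ∧ -1 < ωs ∧ ωs < 1 ∧
      moebius (((List.range n).reverse.map (fun i => !![0, e i; 1, a i])).prod) (-ωs)
        = -ωs := by
  set σ := ((List.range n).map (fun i => Mmat (a i) (e i))).prod with hσdef
  have ha2 : ∀ i < n, 2 ≤ a i := by
    intro i hi
    obtain ⟨hpos, r, hr⟩ := ha i hi
    omega
  have hQ : Qinv σ := Qinv_prod a e n hn ha2 he
  obtain ⟨q1, q2, q3, q4, q5, q6⟩ := hQ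
  simp only [moebius] at hfix
  set A0 := σ 0 0 with hA0
  set B0 := σ 0 1 with hB0
  set C0 := σ 1 0 with hC0
  set D0 := σ 1 1 with hD0
  have hcR : (0 : ℝ) < (C0 : ℝ) := by exact_mod_cast lt_of_lt_of_le one_pos q1
  have hcne : (C0 : ℝ) ≠ 0 := ne_of_gt hcR
  -- the denominator is nonzero
  have hden : (C0 : ℝ) * ω + D0 ≠ 0 := by
    intro h0
    exact irr_ne_div hirr (-D0) C0 (by push_cast; field_simp; linarith)
  rw [div_eq_iff hden] at hfix
  have hquad : (C0 : ℝ) * ω ^ 2 + ((D0 : ℝ) - A0) * ω - B0 = 0 := by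
    linear_combination -hfix
  -- the conjugate
  set ωs : ℝ := ((A0 : ℝ) - D0) / C0 - ω with hωs
  have hmul : (C0 : ℝ) * ωs = ((A0 : ℝ) - D0) - C0 * ω := by
    rw [hωs]
    field_simp
  have factored : ∀ x : ℝ, (C0 : ℝ) * x ^ 2 + ((D0 : ℝ) - A0) * x - B0
      = (C0 : ℝ) * (x - ω) * (x - ωs) := by
    intro x
    linear_combination (x - ω) * hmul + hquad
  have hquads : (C0 : ℝ) * ωs ^ 2 + ((D0 : ℝ) - A0) * ωs - B0 = 0 := by
    rw [factored ωs]
    ring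
  have hωsne : ωs ≠ ω := by
    intro h
    apply irr_ne_div hirr (A0 - D0) (2 * C0)
    rw [hωs] at h
    push_cast
    field_simp at h ⊢
    linarith
  have hωsirr : Irrational ωs := by
    rw [hωs, show ((A0 : ℝ) - D0) / C0 = ((((A0 - D0 : ℤ) : ℚ) / ((C0 : ℤ) : ℚ) : ℚ) : ℝ) by
      push_cast; ring]
    exact Irrational.ratCast_sub _ hirr
  -- key sign identities
  have e1 : (C0 : ℝ) * (1 - ω) * (1 - ωs) = (C0 : ℝ) + D0 - A0 - B0 := by
    linear_combination -(factored 1)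
  have e2 : (C0 : ℝ) * (1 + ω) * (1 + ωs) = (C0 : ℝ) + A0 - D0 - B0 := by
    linear_combination -(factored (-1))
  -- ωs < 1
  have hne0 : (C0 : ℝ) + D0 - A0 - B0 ≠ 0 := by
    intro h0
    rw [h0] at e1
    rcases mul_eq_zero.mp e1 with h | h
    · rcases mul_eq_zero.mp h with h | h
      · exact hcne h
      · linarith
    · have h1s : ωs = 1 := by linarith
      apply irr_ne_div hirr (A0 - D0 - C0) C0
      rw [hωs] at h1s
      push_cast
      field_simp at h1s ⊢
      linarith
  have hle0 : (C0 : ℝ) + D0 - A0 - B0 ≤ 0 := by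
    have h : (C0 : ℤ) + D0 - A0 - B0 ≤ 0 := by linarith
    exact_mod_cast h
  have hlt0 : (C0 : ℝ) * (1 - ω) * (1 - ωs) < 0 := by
    rw [e1]; exact lt_of_le_of_ne hle0 hne0
  have hωs_lt : ωs < 1 := by
    by_contra hcon
    push_neg at hcon
    have hp : 0 ≤ (C0 : ℝ) * (ω - 1) * (ωs - 1) :=
      mul_nonneg (mul_nonneg hcR.le (by linarith)) (by linarith)
    nlinarith [hp, hlt0]
  -- -1 < ωs
  have hgt0 : (0 : ℝ) < (C0 : ℝ) + A0 - D0 - B0 := by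
    have h : (0 : ℤ) < C0 + A0 - D0 - B0 := by linarith
    exact_mod_cast h
  have hωs_gt : -1 < ωs := by
    by_contra hcon
    push_neg at hcon
    have hp : 0 ≤ (C0 : ℝ) * (1 + ω) * (-(1 + ωs)) :=
      mul_nonneg (mul_nonneg hcR.le (by linarith)) (by linarith)
    nlinarith [hp, e2, hgt0]
  -- IsConjPair data
  obtain ⟨A, B, C, k, hk, hApos, hgcd, h1, h2, h3⟩ :=
    primitive_triple C0 (D0 - A0) (-B0) (by exact_mod_cast lt_of_lt_of_le one_pos q1)
  have hkR : (k : ℝ) ≠ 0 := by exact_mod_cast (ne_of_gt hk)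
  have hc' : (C0 : ℝ) = (k : ℝ) * A := by exact_mod_cast congrArg (Int.cast : ℤ → ℝ) h1
  have he' : (D0 : ℝ) - A0 = (k : ℝ) * B := by
    have h := congrArg (Int.cast : ℤ → ℝ) h2; push_cast at h; linarith
  have hb' : -(B0 : ℝ) = (k : ℝ) * C := by
    have h := congrArg (Int.cast : ℤ → ℝ) h3; push_cast at h; linarith
  have hrootω : (A : ℝ) * ω ^ 2 + B * ω + C = 0 := by
    have hk2 : (k : ℝ) * ((A : ℝ) * ω ^ 2 + B * ω + C) = 0 := by
      linear_combination hquad - ω ^ 2 * hc' - ω * he' - hb'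
    exact (mul_eq_zero.mp hk2).resolve_left hkR
  have hrootωs : (A : ℝ) * ωs ^ 2 + B * ωs + C = 0 := by
    have hk2 : (k : ℝ) * ((A : ℝ) * ωs ^ 2 + B * ωs + C) = 0 := by
      linear_combination hquads - ωs ^ 2 * hc' - ωs * he' - hb'
    exact (mul_eq_zero.mp hk2).resolve_left hkR
  -- the dual matrix
  have hmap : (List.range n).reverse.map (fun i => !![0, e i; 1, a i])
      = (((List.range n).map (fun i => Mmat (a i) (e i))).reverse).map Tflip := by
    rw [← List.map_reverse, List.map_map]
    apply List.map_congr_left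
    intro i _
    exact (Tflip_Mmat (a i) (e i)).symm
  have hN : ((List.range n).reverse.map (fun i => !![0, e i; 1, a i])).prod
      = !![D0, B0; C0, A0] := by
    rw [hmap, rev_prod, Tflip_eq]
  refine ⟨ωs, ⟨hirr, A, B, C, hApos, hgcd, hrootω, hrootωs, hωsne⟩, hωs_gt, hωs_lt, ?_⟩
  rw [hN]
  simp only [moebius]
  rw [show !![D0, B0; C0, A0] 0 0 = D0 from rfl, show !![D0, B0; C0, A0] 0 1 = B0 from rfl,
    show !![D0, B0; C0, A0] 1 0 = C0 from rfl, show !![D0, B0; C0, A0] 1 1 = A0 from rfl]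
  have hden2 : (C0 : ℝ) * (-ωs) + A0 ≠ 0 := by
    intro h0
    exact irr_ne_div hωsirr A0 C0 (by field_simp; linarith)
  rw [div_eq_iff hden2]
  linear_combination -hquads
end
end

section
/- If ω is an E-reduced quadratic irrational of discriminant Δ, then T_E(ω) is again an E-reduced quadratic irrational of discriminant Δ; that is, T_E maps ℛ_E(Δ) into ℛ_E(Δ). -/
noncomputable section

/-- First ECF digit: `a₁(u) = 2⎣(u+1)/2⎦`. -/
def aE (u : ℝ) : ℤ := 2 * ⌊(u + 1) / 2⌋

/-- Sign digit: `e₁(u) = sgn (u - a₁(u)) ∈ {±1}`. -/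
def eE (u : ℝ) : ℤ := if (aE u : ℝ) < u then 1 else -1

/-- The ECF Gauss shift `T_E(u) = e₁(u) / (u - a₁(u))`. -/
def TE (u : ℝ) : ℝ := (eE u : ℝ) / (u - aE u)

lemma my_eE_cases (ω : ℝ) : eE ω = 1 ∨ eE ω = -1 := by
  unfold eE; split <;> simp

lemma my_aE_le (ω : ℝ) : (aE ω : ℝ) ≤ ω + 1 := by
  have := Int.floor_le ((ω + 1) / 2)
  unfold aE; push_cast; linarith

lemma my_lt_aE (ω : ℝ) : ω < (aE ω : ℝ) + 1 := by
  have := Int.lt_floor_add_one ((ω + 1) / 2)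
  unfold aE; push_cast; linarith

lemma my_aE_ge_two (ω : ℝ) (hω : 1 < ω) : 2 ≤ aE ω := by
  have : (1 : ℤ) ≤ ⌊(ω + 1) / 2⌋ := by
    rw [Int.le_floor]; push_cast; linarith
  unfold aE; omega

lemma my_ne_aE (ω : ℝ) (hirr : Irrational ω) : ω ≠ (aE ω : ℝ) :=
  hirr.ne_int _

lemma my_aE_lt_bounds (ω : ℝ) (hirr : Irrational ω) :
    (aE ω : ℝ) - 1 < ω := by
  have h := my_aE_le ω
  have hne : ω ≠ ((aE ω - 1 : ℤ) : ℝ) := hirr.ne_int _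
  push_cast at hne
  rcases lt_or_eq_of_le (by linarith : (aE ω : ℝ) - 1 ≤ ω) with h' | h'
  · exact h'
  · exact absurd h'.symm hne

lemma my_transform (ω : ℝ) (hirr : Irrational ω) (A B C : ℤ) (hA : A ≠ 0)
    (hgcd : Int.gcd (Int.gcd A B : ℤ) C = 1)
    (hroot : (A : ℝ) * ω ^ 2 + B * ω + C = 0) :
    ∃ A' B' C' : ℤ, 0 < A' ∧ Int.gcd (Int.gcd A' B' : ℤ) C' = 1 ∧
      B' ^ 2 - 4 * A' * C' = B ^ 2 - 4 * A * C ∧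
      ∀ x : ℝ, x ≠ (aE ω : ℝ) → (A : ℝ) * x ^ 2 + B * x + C = 0 →
        (A' : ℝ) * ((eE ω : ℝ) / (x - aE ω)) ^ 2
          + (B' : ℝ) * ((eE ω : ℝ) / (x - aE ω)) + C' = 0 := by
  obtain ⟨a, ha⟩ : ∃ a : ℤ, aE ω = a := ⟨_, rfl⟩
  obtain ⟨e, he⟩ : ∃ e : ℤ, eE ω = e := ⟨_, rfl⟩
  have hecases : e = 1 ∨ e = -1 := he ▸ my_eE_cases ω
  have hee : e * e = 1 := by rcases hecases with h | h <;> rw [h] <;> ring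
  have heeR : (e : ℝ) * e = 1 := by exact_mod_cast hee
  rw [ha, he]
  have hωa : ω ≠ (a : ℝ) := ha ▸ my_ne_aE ω hirr
  have hAne : (A : ℝ) ≠ 0 := Int.cast_ne_zero.mpr hA
  have hA0ne : A * a ^ 2 + B * a + C ≠ 0 := by
    intro h0
    have h0R : (A : ℝ) * (a : ℝ) ^ 2 + B * a + C = 0 := by
      exact_mod_cast congrArg (Int.cast : ℤ → ℝ) h0
    have hfac : (ω - (a : ℝ)) * ((A : ℝ) * (ω + a) + B) = 0 := by
      linear_combination hroot - h0R
    have h2 : (A : ℝ) * (ω + a) + B = 0 := by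
      rcases mul_eq_zero.mp hfac with h | h
      · exact absurd (sub_eq_zero.mp h) hωa
      · exact h
    refine hirr ⟨((-B - A * a : ℤ) : ℚ) / ((A : ℤ) : ℚ), ?_⟩
    push_cast
    field_simp
    linear_combination -h2
  have key0 : ∀ x : ℝ, x ≠ (a : ℝ) → (A : ℝ) * x ^ 2 + B * x + C = 0 →
      ((A * a ^ 2 + B * a + C : ℤ) : ℝ) * ((e : ℝ) / (x - a)) ^ 2
        + ((e * (2 * A * a + B) : ℤ) : ℝ) * ((e : ℝ) / (x - a)) + (A : ℝ) = 0 := by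
    intro x hxa hx
    have hd : x - (a : ℝ) ≠ 0 := sub_ne_zero.mpr hxa
    have expand : ((A * a ^ 2 + B * a + C : ℤ) : ℝ) * ((e : ℝ) / (x - a)) ^ 2
        + ((e * (2 * A * a + B) : ℤ) : ℝ) * ((e : ℝ) / (x - a)) + (A : ℝ)
        = ((A : ℝ) * x ^ 2 + B * x + C) * ((e : ℝ) * e) / (x - a) ^ 2
          + (1 - (e : ℝ) * e) * A := by
      push_cast
      field_simp
      ring
    rw [expand, hx, heeR]
    norm_num
  have hdisc0 : (e * (2 * A * a + B)) ^ 2 - 4 * (A * a ^ 2 + B * a + C) * A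
      = B ^ 2 - 4 * A * C := by linear_combination (2 * A * a + B) ^ 2 * hee
  have hgcd0 : Int.gcd (Int.gcd (A * a ^ 2 + B * a + C) (e * (2 * A * a + B)) : ℤ) A = 1 := by
    set g : ℕ := Int.gcd (Int.gcd (A * a ^ 2 + B * a + C) (e * (2 * A * a + B)) : ℤ) A with hg
    have hgA0 : (g : ℤ) ∣ A * a ^ 2 + B * a + C :=
      dvd_trans (Int.gcd_dvd_left _ _) (Int.gcd_dvd_left _ _)
    have hgB0 : (g : ℤ) ∣ e * (2 * A * a + B) :=
      dvd_trans (Int.gcd_dvd_left _ _) (Int.gcd_dvd_right _ _)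
    have hdA : (g : ℤ) ∣ A := Int.gcd_dvd_right _ _
    have hdB : (g : ℤ) ∣ B := by
      have h1 : (g : ℤ) ∣ e * (e * (2 * A * a + B)) := Dvd.dvd.mul_left hgB0 e
      have h2 : e * (e * (2 * A * a + B)) = 2 * A * a + B := by
        linear_combination (2 * A * a + B) * hee
      rw [h2] at h1
      have h3 : B = (2 * A * a + B) - A * (2 * a) := by ring
      rw [h3]; exact dvd_sub h1 (Dvd.dvd.mul_right hdA _)
    have hdC : (g : ℤ) ∣ C := by
      have h1 : C = (A * a ^ 2 + B * a + C) - A * a ^ 2 - B * a := by ring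
      rw [h1]
      exact dvd_sub (dvd_sub hgA0 (Dvd.dvd.mul_right hdA _)) (Dvd.dvd.mul_right hdB _)
    have hdvd : (g : ℤ) ∣ (Int.gcd (Int.gcd A B : ℤ) C : ℤ) :=
      Int.dvd_coe_gcd (Int.dvd_coe_gcd hdA hdB) hdC
    rw [hgcd] at hdvd
    exact_mod_cast Int.eq_one_of_dvd_one (by positivity) hdvd
  rcases lt_or_gt_of_ne hA0ne with hneg | hpos
  · refine ⟨-(A * a ^ 2 + B * a + C), -(e * (2 * A * a + B)), -A, by omega, ?_, ?_, ?_⟩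
    · have hneg1 : ∀ m n : ℤ, Int.gcd (-m) n = Int.gcd m n := fun m n => by simp [Int.gcd]
      have hneg2 : ∀ m n : ℤ, Int.gcd m (-n) = Int.gcd m n := fun m n => by simp [Int.gcd]
      simp only [hneg1, hneg2]
      exact hgcd0
    · linear_combination hdisc0
    · intro x hxa hx
      have h := key0 x hxa hx
      push_cast at h ⊢
      linarith
  · exact ⟨_, _, _, hpos, hgcd0, hdisc0, key0⟩

theorem stmt9 (Δ : ℤ) (ω : ℝ) (hω : 1 < ω) (hdisc : HasDisc ω Δ)
    (hred : ∃ ω' : ℝ, IsConjPair ω ω' ∧ -1 < ω' ∧ ω' < 1) :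
    1 < TE ω ∧ HasDisc (TE ω) Δ ∧
      ∃ ω' : ℝ, IsConjPair (TE ω) ω' ∧ -1 < ω' ∧ ω' < 1 := by
  obtain ⟨hirr, A, B, C, hA, hgcd, hroot, hΔ⟩ := hdisc
  obtain ⟨ω', ⟨-, A₂, B₂, C₂, hA₂, hgcd₂, hroot₂, hroot₂', hne'⟩, hm1, hp1⟩ := hred
  have ha2 : 2 ≤ aE ω := my_aE_ge_two ω hω
  have ha2R : (2 : ℝ) ≤ (aE ω : ℝ) := by exact_mod_cast ha2
  have hlow : (aE ω : ℝ) - 1 < ω := my_aE_lt_bounds ω hirr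
  have hhigh : ω < (aE ω : ℝ) + 1 := my_lt_aE ω
  have hωa : ω ≠ (aE ω : ℝ) := my_ne_aE ω hirr
  have hd : ω - (aE ω : ℝ) ≠ 0 := sub_ne_zero.mpr hωa
  have hTE : 1 < TE ω := by
    unfold TE eE
    split
    · rename_i h
      push_cast
      rw [lt_div_iff₀ (by linarith : (0:ℝ) < ω - aE ω)]
      linarith
    · rename_i h
      have hlt : ω < (aE ω : ℝ) := lt_of_le_of_ne (not_lt.mp h) hωa
      push_cast
      rw [lt_div_iff_of_neg (by linarith : ω - (aE ω : ℝ) < 0)]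
      linarith
  have hTEirr : Irrational (TE ω) := by
    have h1 : Irrational (ω - (aE ω : ℝ)) := hirr.sub_intCast _
    unfold TE eE
    split
    · have := h1.ratCast_div (q := 1) one_ne_zero
      simpa using this
    · have := h1.ratCast_div (q := -1) (by norm_num)
      simpa using this
  obtain ⟨A', B', C', hA'pos, hgcd', hdisc', key⟩ :=
    my_transform ω hirr A B C hA.ne' hgcd hroot
  obtain ⟨A₂', B₂', C₂', hA₂'pos, hgcd₂', -, key₂⟩ :=
    my_transform ω hirr A₂ B₂ C₂ hA₂.ne' hgcd₂ hroot₂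
  have hTEeq : TE ω = (eE ω : ℝ) / (ω - aE ω) := rfl
  have hrootTE : (A' : ℝ) * (TE ω) ^ 2 + B' * (TE ω) + C' = 0 := by
    rw [hTEeq]; exact key ω hωa hroot
  have hrootTE₂ : (A₂' : ℝ) * (TE ω) ^ 2 + B₂' * (TE ω) + C₂' = 0 := by
    rw [hTEeq]; exact key₂ ω hωa hroot₂
  refine ⟨hTE, ⟨hTEirr, A', B', C', hA'pos, hgcd', hrootTE, by rw [hΔ, ← hdisc']⟩, ?_⟩
  have hω'a : ω' ≠ (aE ω : ℝ) := by intro h; rw [h] at hp1; linarith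
  have hd' : ω' - (aE ω : ℝ) ≠ 0 := sub_ne_zero.mpr hω'a
  have hrootv' := key₂ ω' hω'a hroot₂'
  have heneZ : eE ω ≠ 0 := by
    rcases my_eE_cases ω with h | h <;> omega
  have hvne : (eE ω : ℝ) / (ω' - aE ω) ≠ TE ω := by
    intro h
    rw [hTEeq] at h
    apply hne'
    field_simp at h
    linarith
  have hωd : ω' - (aE ω : ℝ) < -1 := by linarith
  have hprod : ((eE ω : ℝ) / (ω' - aE ω)) * (ω' - aE ω) = eE ω := by
    field_simp
  have hbounds : -1 < (eE ω : ℝ) / (ω' - aE ω) ∧ (eE ω : ℝ) / (ω' - aE ω) < 1 := by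
    set v := (eE ω : ℝ) / (ω' - aE ω) with hv
    have hdneg : ω' - (aE ω : ℝ) < 0 := by linarith
    rcases my_eE_cases ω with h | h <;> rw [h] at hprod <;> push_cast at hprod
    · have hvneg : v < 0 := by
        by_contra hc
        push_neg at hc
        have h1 := mul_nonpos_of_nonneg_of_nonpos hc hdneg.le
        rw [hprod] at h1
        linarith
      refine ⟨?_, by linarith⟩
      by_contra hc
      push_neg at hc
      have h1 := mul_nonneg (by linarith : (0:ℝ) ≤ -(v + 1))
        (by linarith : (0:ℝ) ≤ -(ω' - (aE ω : ℝ) + 1))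
      have h2 : -(v + 1) * -(ω' - (aE ω : ℝ) + 1)
          = v * (ω' - (aE ω : ℝ)) + v + (ω' - (aE ω : ℝ)) + 1 := by ring
      rw [h2, hprod] at h1
      linarith
    · have hvpos : 0 < v := by
        by_contra hc
        push_neg at hc
        have h1 := mul_nonneg (by linarith : (0:ℝ) ≤ -v)
          (by linarith : (0:ℝ) ≤ -(ω' - (aE ω : ℝ)))
        have h2 : -v * -(ω' - (aE ω : ℝ)) = v * (ω' - (aE ω : ℝ)) := by ring
        rw [h2, hprod] at h1
        linarith
      refine ⟨by linarith, ?_⟩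
      by_contra hc
      push_neg at hc
      have h1 := mul_nonneg (by linarith : (0:ℝ) ≤ v - 1)
        (by linarith : (0:ℝ) ≤ -(ω' - (aE ω : ℝ)))
      have h2 : (v - 1) * -(ω' - (aE ω : ℝ))
          = -(v * (ω' - (aE ω : ℝ))) + (ω' - (aE ω : ℝ)) := by ring
      rw [h2, hprod] at h1
      linarith
  exact ⟨(eE ω : ℝ) / (ω' - aE ω),
    ⟨hTEirr, A₂', B₂', C₂', hA₂'pos, hgcd₂', hrootTE₂, hrootv', hvne⟩,
    hbounds.1, hbounds.2⟩
end
end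

section
/- For every quadratic irrational u of discriminant Δ there exists a matrix σ ∈ Θ̃ such that σ·u (Möbius action) is an E-reduced quadratic irrational of discriminant Δ; that is, the Θ̃-orbit of u meets ℛ_E(Δ). -/
noncomputable section

/-- Membership in the Theta group `Θ̃`: an integer matrix with determinant `±1`
which is congruent to `I₂` or to `J₂ = (0,1;1,0)` mod 2. -/
def IsTheta (m : Matrix (Fin 2) (Fin 2) ℤ) : Prop :=
  (m.det = 1 ∨ m.det = -1) ∧
  (m.map (Int.cast : ℤ → ZMod 2) = 1 ∨ m.map (Int.cast : ℤ → ZMod 2) = !![0, 1; 1, 0])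

lemma lin_ne {x : ℝ} (hx : Irrational x) {c d : ℤ} (h : c ≠ 0 ∨ d ≠ 0) :
    (c : ℝ) * x + d ≠ 0 := by
  rcases eq_or_ne c 0 with hc | hc
  · subst hc
    simp only [Int.cast_zero, zero_mul, zero_add, ne_eq, Int.cast_eq_zero]
    rcases h with h | h
    · exact absurd rfl h
    · exact h
  · intro heq
    apply hx
    refine ⟨-(d : ℚ) / c, ?_⟩
    have hc' : (c : ℝ) ≠ 0 := Int.cast_ne_zero.mpr hc
    push_cast
    field_simp
    linarith

lemma irr_inv {x : ℝ} (hx : Irrational x) : Irrational x⁻¹ := by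
  rintro ⟨q, hq⟩
  apply hx
  refine ⟨q⁻¹, ?_⟩
  push_cast
  rw [hq, inv_inv]

lemma moebius_lit (a b c d : ℤ) (x : ℝ) :
    moebius !![a, b; c, d] x = ((a : ℝ) * x + b) / ((c : ℝ) * x + d) := by
  simp [moebius]

lemma moebius_one (x : ℝ) : moebius 1 x = x := by
  rw [Matrix.one_fin_two, moebius_lit]
  push_cast
  norm_num

lemma moebius_mul (M N : Matrix (Fin 2) (Fin 2) ℤ) (x : ℝ) (hx : Irrational x)
    (hM : M.det = 1 ∨ M.det = -1) (hN : N.det = 1 ∨ N.det = -1) :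
    moebius (M * N) x = moebius M (moebius N x) := by
  have hMdet : M.det ≠ 0 := by rcases hM with h | h <;> simp [h]
  have hNdet : N.det ≠ 0 := by rcases hN with h | h <;> simp [h]
  have hMNdet : (M * N).det ≠ 0 := by
    rw [Matrix.det_mul]; exact mul_ne_zero hMdet hNdet
  have hbot : ∀ P : Matrix (Fin 2) (Fin 2) ℤ, P.det ≠ 0 →
      ((P 1 0 : ℝ) * x + P 1 1) ≠ 0 := by
    intro P hP
    apply lin_ne hx
    by_contra hc
    push_neg at hc
    rw [Matrix.det_fin_two] at hP
    rw [hc.1, hc.2] at hP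
    simp at hP
  have hL := hbot N hNdet
  have hK := hbot (M * N) hMNdet
  have hmulE : ∀ i j, (((M * N) i j : ℤ) : ℝ) =
      (M i 0 : ℝ) * N 0 j + (M i 1 : ℝ) * N 1 j := by
    intro i j
    rw [Matrix.mul_apply, Fin.sum_univ_two]
    push_cast
    ring
  have hden : (M 1 0 : ℝ) * moebius N x + M 1 1 =
      (((M * N) 1 0 : ℝ) * x + (M * N) 1 1) / ((N 1 0 : ℝ) * x + N 1 1) := by
    rw [moebius]
    rw [hmulE, hmulE]
    have hL' : x * (N 1 0 : ℝ) + N 1 1 ≠ 0 := by rw [mul_comm]; exact hL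
    field_simp
    ring
  have hden2 : (M 1 0 : ℝ) * moebius N x + M 1 1 ≠ 0 := by
    rw [hden]; exact div_ne_zero hK hL
  rw [show moebius (M * N) x =
      (((M * N) 0 0 : ℝ) * x + (M * N) 0 1) / (((M * N) 1 0 : ℝ) * x + (M * N) 1 1) from rfl,
    show moebius M (moebius N x) =
      ((M 0 0 : ℝ) * (moebius N x) + M 0 1) / ((M 1 0 : ℝ) * (moebius N x) + M 1 1) from rfl]
  rw [div_eq_div_iff hK hden2]
  rw [show moebius N x = ((N 0 0 : ℝ) * x + N 0 1) / ((N 1 0 : ℝ) * x + N 1 1) from rfl]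
  rw [hmulE, hmulE, hmulE, hmulE]
  field_simp
  ring

lemma isTheta_mul {M N : Matrix (Fin 2) (Fin 2) ℤ} (hM : IsTheta M) (hN : IsTheta N) :
    IsTheta (M * N) := by
  obtain ⟨hMd, hMm⟩ := hM
  obtain ⟨hNd, hNm⟩ := hN
  constructor
  · rw [Matrix.det_mul]
    rcases hMd with h | h <;> rcases hNd with h' | h' <;> simp [h, h']
  · have hmap : (M * N).map (Int.cast : ℤ → ZMod 2) =
        M.map (Int.cast : ℤ → ZMod 2) * N.map (Int.cast : ℤ → ZMod 2) := by
      have := Matrix.map_mul (L := M) (M := N) (f := Int.castRingHom (ZMod 2))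
      simpa using this
    rw [hmap]
    rcases hMm with h | h <;> rcases hNm with h' | h' <;> rw [h, h']
    · left; simp
    · right; simp
    · right; simp
    · left; decide

lemma gcd_neg3 {A B C : ℤ} (h : Int.gcd (Int.gcd A B : ℤ) C = 1) :
    Int.gcd (Int.gcd (-A) (-B) : ℤ) (-C) = 1 := by
  simpa [Int.gcd, Int.natAbs_neg] using h

lemma gcd_negB {A B C : ℤ} (h : Int.gcd (Int.gcd A B : ℤ) C = 1) :
    Int.gcd (Int.gcd A (-B) : ℤ) C = 1 := by
  simpa [Int.gcd, Int.natAbs_neg] using h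

lemma finish_pair {v v' : ℝ} {A B C : ℤ} (hv : Irrational v) (hA : A ≠ 0)
    (hg : Int.gcd (Int.gcd A B : ℤ) C = 1)
    (h1 : (A : ℝ) * v ^ 2 + B * v + C = 0)
    (h2 : (A : ℝ) * v' ^ 2 + B * v' + C = 0) (hne : v' ≠ v) :
    HasDisc v (B ^ 2 - 4 * A * C) ∧ IsConjPair v v' := by
  rcases hA.lt_or_gt with h | h
  · refine ⟨⟨hv, -A, -B, -C, by omega, gcd_neg3 hg, ?_, by ring⟩,
      hv, -A, -B, -C, by omega, gcd_neg3 hg, ?_, ?_, hne⟩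
    · push_cast; linear_combination -h1
    · push_cast; linear_combination -h1
    · push_cast; linear_combination -h2
  · exact ⟨⟨hv, A, B, C, h, hg, h1, rfl⟩, hv, A, B, C, h, hg, h1, h2, hne⟩

lemma key : ∀ n : ℕ, ∀ (v v' : ℝ) (A B C : ℤ), Irrational v → Irrational v' →
    A ≠ 0 → A.natAbs ≤ n → Int.gcd (Int.gcd A B : ℤ) C = 1 →
    (A : ℝ) * v ^ 2 + B * v + C = 0 → (A : ℝ) * v' ^ 2 + B * v' + C = 0 → v' ≠ v →
    ∃ σ : Matrix (Fin 2) (Fin 2) ℤ, IsTheta σ ∧ 1 < moebius σ v ∧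
      HasDisc (moebius σ v) (B ^ 2 - 4 * A * C) ∧
      ∃ ω', IsConjPair (moebius σ v) ω' ∧ -1 < ω' ∧ ω' < 1 := by
  intro n
  induction n with
  | zero =>
    intro v v' A B C _ _ hA hle _ _ _ _
    exact absurd (Int.natAbs_eq_zero.mp (Nat.le_zero.mp hle)) hA
  | succ n ih =>
    intro v v' A B C hv hv' hA hle hg h1 h2 hne
    by_cases hdone1 : (-1 < v' ∧ v' < 1) ∧ 1 < v
    · obtain ⟨⟨hb1, hb2⟩, hb3⟩ := hdone1
      refine ⟨1, ⟨Or.inl Matrix.det_one, Or.inl (Matrix.map_one _ (by simp) (by simp))⟩,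
        ?_, ?_, ?_⟩
      · rw [moebius_one]; exact hb3
      · rw [moebius_one]; exact (finish_pair hv hA hg h1 h2 hne).1
      · rw [moebius_one]
        exact ⟨v', (finish_pair hv hA hg h1 h2 hne).2, hb1, hb2⟩
    by_cases hdone2 : (-1 < v' ∧ v' < 1) ∧ v < -1
    · obtain ⟨⟨hb1, hb2⟩, hb3⟩ := hdone2
      have hdet : (!![-1, 0; 0, 1] : Matrix (Fin 2) (Fin 2) ℤ).det = -1 := by
        simp [Matrix.det_fin_two_of]
      have hmap : (!![-1, 0; 0, 1] : Matrix (Fin 2) (Fin 2) ℤ).map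
          (Int.cast : ℤ → ZMod 2) = 1 := by
        rw [Matrix.one_fin_two]
        ext i j
        fin_cases i <;> fin_cases j <;> simp [Matrix.map_apply] <;> decide
      have hm : moebius !![-1, 0; 0, 1] v = -v := by
        rw [moebius_lit]; push_cast; norm_num
      have h1n : ((A : ℤ) : ℝ) * (-v) ^ 2 + ((-B : ℤ) : ℝ) * (-v) + ((C : ℤ) : ℝ) = 0 := by
        push_cast; linear_combination h1
      have h2n : ((A : ℤ) : ℝ) * (-v') ^ 2 + ((-B : ℤ) : ℝ) * (-v') + ((C : ℤ) : ℝ) = 0 := by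
        push_cast; linear_combination h2
      have hne' : -v' ≠ -v := fun h => hne (neg_injective h)
      have hfp := finish_pair hv.neg hA (gcd_negB hg) h1n h2n hne'
      refine ⟨!![-1, 0; 0, 1], ⟨Or.inr hdet, Or.inl hmap⟩, ?_, ?_, ?_⟩
      · rw [hm]; linarith
      · rw [hm, show B ^ 2 - 4 * A * C = (-B) ^ 2 - 4 * A * C by ring]
        exact hfp.1
      · rw [hm]
        exact ⟨-v', hfp.2, by linarith, by linarith⟩
    -- the continued-fraction step
    set k : ℤ := round (v / 2) with hk
    set a : ℤ := 2 * k with ha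
    have hvne : v ≠ (a : ℝ) := hv.ne_int a
    have hvna : v - (a : ℝ) ≠ 0 := sub_ne_zero_of_ne hvne
    have hva : |v - (a : ℝ)| < 1 := by
      have h12 : |v / 2 - (k : ℝ)| ≤ 1 / 2 := abs_sub_round (v / 2)
      have hle1 : |v - (a : ℝ)| ≤ 1 := by
        have he : v - (a : ℝ) = 2 * (v / 2 - (k : ℝ)) := by push_cast [ha]; ring
        rw [he, abs_mul]
        rw [show |(2 : ℝ)| = 2 by norm_num]
        linarith
      rcases lt_or_eq_of_le hle1 with h | h
      · exact h
      · exfalso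
        rcases (abs_eq (by norm_num : (0 : ℝ) ≤ 1)).mp h with h' | h'
        · exact hv.ne_int (a + 1) (by push_cast; linarith)
        · exact hv.ne_int (a - 1) (by push_cast; linarith)
    have hv'ne : v' ≠ (a : ℝ) := hv'.ne_int a
    have hv'na : v' - (a : ℝ) ≠ 0 := sub_ne_zero_of_ne hv'ne
    set w : ℝ := (v - (a : ℝ))⁻¹ with hw
    set w' : ℝ := (v' - (a : ℝ))⁻¹ with hw'
    have hwirr : Irrational w := irr_inv (hv.sub_intCast a)
    have hw'irr : Irrational w' := irr_inv (hv'.sub_intCast a)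
    set A₁ : ℤ := A * a ^ 2 + B * a + C with hA₁d
    set B₁ : ℤ := 2 * A * a + B with hB₁d
    set C₁ : ℤ := A with hC₁d
    have hw1 : (A₁ : ℝ) * w ^ 2 + B₁ * w + C₁ = 0 := by
      have hexp : (A₁ : ℝ) * w ^ 2 + B₁ * w + C₁ = ((A : ℝ) * v ^ 2 + B * v + C) * w ^ 2 := by
        rw [hw, hA₁d, hB₁d, hC₁d]
        push_cast
        field_simp
        ring
      rw [hexp, h1, zero_mul]
    have hw2 : (A₁ : ℝ) * w' ^ 2 + B₁ * w' + C₁ = 0 := by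
      have hexp : (A₁ : ℝ) * w' ^ 2 + B₁ * w' + C₁ = ((A : ℝ) * v' ^ 2 + B * v' + C) * w' ^ 2 := by
        rw [hw', hA₁d, hB₁d, hC₁d]
        push_cast
        field_simp
        ring
      rw [hexp, h2, zero_mul]
    have hwne : w' ≠ w := by
      intro h
      apply hne
      rw [hw, hw'] at h
      have h3 : v' - (a : ℝ) = v - (a : ℝ) := inv_injective h
      linarith
    have hA₁ : A₁ ≠ 0 := by
      intro h0
      have hlin : (B₁ : ℝ) * w + C₁ = 0 := by
        rw [h0] at hw1
        push_cast at hw1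
        linarith [hw1]
      exact lin_ne hwirr (Or.inr (hC₁d ▸ hA)) hlin
    have hg₁ : Int.gcd (Int.gcd A₁ B₁ : ℤ) C₁ = 1 := by
      set g : ℕ := Int.gcd (Int.gcd A₁ B₁ : ℤ) C₁ with hgd
      have hgA₁ : (g : ℤ) ∣ A₁ := dvd_trans (Int.gcd_dvd_left _ _) (Int.gcd_dvd_left _ _)
      have hgB₁ : (g : ℤ) ∣ B₁ := dvd_trans (Int.gcd_dvd_left _ _) (Int.gcd_dvd_right _ _)
      have hgC₁ : (g : ℤ) ∣ C₁ := Int.gcd_dvd_right _ _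
      have hgA : (g : ℤ) ∣ A := hC₁d ▸ hgC₁
      have hgB : (g : ℤ) ∣ B := by
        have : B = B₁ - 2 * a * A := by rw [hB₁d]; ring
        rw [this]
        exact dvd_sub hgB₁ (Dvd.dvd.mul_left hgA (2 * a))
      have hgC : (g : ℤ) ∣ C := by
        have : C = A₁ - A * a ^ 2 - B * a := by rw [hA₁d]; ring
        rw [this]
        exact dvd_sub (dvd_sub hgA₁ (Dvd.dvd.mul_right hgA _)) (Dvd.dvd.mul_right hgB _)
      have hdvd1 : (g : ℤ) ∣ 1 := by
        have := Int.dvd_gcd (Int.natCast_dvd_natCast.mpr (Int.dvd_gcd hgA hgB)) hgC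
        rw [hg] at this; exact_mod_cast this
      exact_mod_cast Int.eq_one_of_dvd_one (by positivity) hdvd1
    have hsum : (A : ℝ) * v + A * v' + B = 0 := by
      have hd : v - v' ≠ 0 := sub_ne_zero_of_ne (Ne.symm hne)
      have h3 : ((A : ℝ) * v + A * v' + B) * (v - v') = 0 := by
        linear_combination h1 - h2
      rcases mul_eq_zero.mp h3 with h4 | h4
      · exact h4
      · exact absurd h4 hd
    have hprod : (A₁ : ℝ) = A * ((a : ℝ) - v) * ((a : ℝ) - v') := by
      rw [hA₁d]
      push_cast
      linear_combination ((a : ℝ) - v) * hsum + h1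
    have hone : |v' - (a : ℝ)| ≠ 1 := by
      intro h
      rcases (abs_eq (by norm_num : (0 : ℝ) ≤ 1)).mp h with h' | h'
      · exact hv'.ne_int (a + 1) (by push_cast; linarith)
      · exact hv'.ne_int (a - 1) (by push_cast; linarith)
    have hSdet : (!![0, 1; 1, -a] : Matrix (Fin 2) (Fin 2) ℤ).det = -1 := by
      simp [Matrix.det_fin_two_of]
    have hSmap : (!![0, 1; 1, -a] : Matrix (Fin 2) (Fin 2) ℤ).map
        (Int.cast : ℤ → ZMod 2) = !![0, 1; 1, 0] := by
      rw [ha]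
      ext i j
      fin_cases i <;> fin_cases j <;> simp [Matrix.map_apply] <;> exact Or.inl rfl
    have hSv : moebius !![0, 1; 1, -a] v = w := by
      rw [moebius_lit, hw]
      push_cast
      rw [show ((0 : ℝ) * v + 1) = 1 by ring, show ((1 : ℝ) * v + -(a : ℝ)) = v - a by ring,
        one_div]
    have hΔ₁ : B ^ 2 - 4 * A * C = B₁ ^ 2 - 4 * A₁ * C₁ := by
      rw [hA₁d, hB₁d, hC₁d]; ring
    rcases lt_or_gt_of_ne hone with hlt | hgt
    · -- recurse
      have habs : |(A₁ : ℝ)| < |(A : ℝ)| := by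
        rw [hprod, abs_mul, abs_mul]
        have h0 : 0 < |(A : ℝ)| := abs_pos.mpr (Int.cast_ne_zero.mpr hA)
        rw [abs_sub_comm ((a : ℝ)) v, abs_sub_comm ((a : ℝ)) v']
        calc |(A : ℝ)| * |v - (a : ℝ)| * |v' - (a : ℝ)|
            < |(A : ℝ)| * |v - (a : ℝ)| * 1 := by
              have hp : 0 < |(A : ℝ)| * |v - (a : ℝ)| :=
                mul_pos h0 (abs_pos.mpr hvna)
              nlinarith
          _ = |(A : ℝ)| * |v - (a : ℝ)| := by ring
          _ < |(A : ℝ)| := mul_lt_of_lt_one_right h0 hva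
      have hnat : A₁.natAbs ≤ n := by
        have hc : (A₁.natAbs : ℝ) < (A.natAbs : ℝ) := by
          rw [Nat.cast_natAbs, Nat.cast_natAbs]
          exact_mod_cast habs
        have := Nat.cast_lt.mp hc
        omega
      obtain ⟨σ', hθ', hgt', hd', ω', hp', hq1', hq2'⟩ :=
        ih w w' A₁ B₁ C₁ hwirr hw'irr hA₁ hnat hg₁ hw1 hw2 hwne
      refine ⟨σ' * !![0, 1; 1, -a], isTheta_mul hθ' ⟨Or.inr hSdet, Or.inr hSmap⟩, ?_, ?_, ?_⟩
      all_goals rw [moebius_mul _ _ v hv hθ'.1 (Or.inr hSdet), hSv]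
      · exact hgt'
      · rw [hΔ₁]; exact hd'
      · exact ⟨ω', hp', hq1', hq2'⟩
    · -- finish
      have hw'lt : |w'| < 1 := by
        rw [hw', abs_inv]
        exact inv_lt_one_of_one_lt₀ hgt
      have hwabs : 1 < |w| := by
        rw [hw, abs_inv]
        exact (one_lt_inv₀ (abs_pos.mpr hvna)).mpr hva
      obtain ⟨hq1, hq2⟩ := abs_lt.mp hw'lt
      have hfp := finish_pair hwirr hA₁ hg₁ hw1 hw2 hwne
      rcases lt_abs.mp hwabs with hwgt | hwlt
      · refine ⟨!![0, 1; 1, -a], ⟨Or.inr hSdet, Or.inr hSmap⟩, ?_, ?_, ?_⟩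
        · rw [hSv]; exact hwgt
        · rw [hSv, hΔ₁]; exact hfp.1
        · rw [hSv]; exact ⟨w', hfp.2, hq1, hq2⟩
      · have hS2det : (!![0, -1; 1, -a] : Matrix (Fin 2) (Fin 2) ℤ).det = 1 := by
          simp [Matrix.det_fin_two_of]
        have hS2map : (!![0, -1; 1, -a] : Matrix (Fin 2) (Fin 2) ℤ).map
            (Int.cast : ℤ → ZMod 2) = !![0, 1; 1, 0] := by
          rw [ha]
          ext i j
          fin_cases i <;> fin_cases j <;> simp [Matrix.map_apply] <;>
            first
              | exact Or.inl rfl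
              | decide
        have hS2v : moebius !![0, -1; 1, -a] v = -w := by
          rw [moebius_lit, hw]
          push_cast
          rw [show ((0 : ℝ) * v + -1) = -1 by ring,
            show ((1 : ℝ) * v + -(a : ℝ)) = v - a by ring, neg_div, one_div]
        have hn1 : ((A₁ : ℤ) : ℝ) * (-w) ^ 2 + ((-B₁ : ℤ) : ℝ) * (-w) + ((C₁ : ℤ) : ℝ) = 0 := by
          push_cast
          linear_combination hw1
        have hn2 : ((A₁ : ℤ) : ℝ) * (-w') ^ 2 + ((-B₁ : ℤ) : ℝ) * (-w') + ((C₁ : ℤ) : ℝ) = 0 := by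
          push_cast
          linear_combination hw2
        have hne2 : -w' ≠ -w := fun h => hwne (neg_injective h)
        have hfp2 := finish_pair hwirr.neg hA₁ (gcd_negB hg₁) hn1 hn2 hne2
        refine ⟨!![0, -1; 1, -a], ⟨Or.inl hS2det, Or.inr hS2map⟩, ?_, ?_, ?_⟩
        · rw [hS2v]; linarith
        · rw [hS2v, show B ^ 2 - 4 * A * C = (-B₁) ^ 2 - 4 * A₁ * C₁ by rw [hΔ₁]; ring]
          exact hfp2.1
        · rw [hS2v]
          exact ⟨-w', hfp2.2, by linarith, by linarith⟩

theorem stmt11 (Δ : ℤ) (u : ℝ) (hdisc : HasDisc u Δ) :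
    ∃ σ : Matrix (Fin 2) (Fin 2) ℤ, IsTheta σ ∧
      1 < moebius σ u ∧ HasDisc (moebius σ u) Δ ∧
      ∃ ω' : ℝ, IsConjPair (moebius σ u) ω' ∧ -1 < ω' ∧ ω' < 1 := by
  obtain ⟨hu, A, B, C, hApos, hg, hroot, hΔ⟩ := hdisc
  have hAne : (A : ℝ) ≠ 0 := Int.cast_ne_zero.mpr hApos.ne'
  set u' : ℝ := -(B : ℝ) / A - u with hu'd
  have hroot' : (A : ℝ) * u' ^ 2 + B * u' + C = 0 := by
    have hexp : (A : ℝ) * u' ^ 2 + B * u' + C = (A : ℝ) * u ^ 2 + B * u + C := by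
      rw [hu'd]
      field_simp
      ring
    rw [hexp]
    exact hroot
  have hu'irr : Irrational u' := by
    have hq : u' = ((-(B : ℚ) / A : ℚ) : ℝ) - u := by
      rw [hu'd]; push_cast; ring
    rw [hq]
    exact Irrational.ratCast_sub (q := _) hu
  have hne : u' ≠ u := by
    intro h
    apply hu
    refine ⟨-(B : ℚ) / (2 * A), ?_⟩
    rw [hu'd] at h
    push_cast
    have h2A : (2 : ℝ) * A ≠ 0 := by positivity
    field_simp at h ⊢
    linarith
  obtain ⟨σ, hθ, hgt, hd, ω', hp, hq1, hq2⟩ :=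
    key A.natAbs u u' A B C hu hu'irr hApos.ne' le_rfl hg hroot hroot' hne
  refine ⟨σ, hθ, hgt, ?_, ω', hp, hq1, hq2⟩
  rw [hΔ]
  exact hd
end
end

section
/- Let M(a,e) denote the matrix (a,e;1,0). A matrix σ ∈ GL(2,ℤ) can be written as σ = M(a₁,e₁)···M(aₙ,eₙ) for some n ≥ 2, positive even integers a₁,…,aₙ, and signs e₁,…,eₙ ∈ {±1}, if and only if σ has the form σ = (p′, p·e; q′, q·e) for some e ∈ {±1} and integers p′, p, q′, q satisfying p′ > p > q > 0 and p′ > q′ > q, and σ ≡ I₂ (mod 2) or σ ≡ J₂ (mod 2), where J₂ = (0,1;1,0). -/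
noncomputable section

lemma map_fin_two (f : ℤ → ZMod 2) (a b c d : ℤ) :
    (!![a,b;c,d] : Matrix (Fin 2) (Fin 2) ℤ).map f = !![f a, f b; f c, f d] := by
  ext i j; fin_cases i <;> fin_cases j <;> simp [Matrix.map_apply]

lemma map_mul2 (M N : Matrix (Fin 2) (Fin 2) ℤ) :
    (M*N).map (Int.cast : ℤ → ZMod 2) = M.map Int.cast * N.map Int.cast :=
  Matrix.map_mul (f := Int.castRingHom (ZMod 2))

lemma fin2eq {α : Type*} {a b c d a' b' c' d' : α} (h1 : a = a') (h2 : b = b')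
    (h3 : c = c') (h4 : d = d') : !![a,b;c,d] = !![a',b';c',d'] := by
  subst h1 h2 h3 h4; rfl

lemma mmat_map (a e : ℤ) (ha : Even a) (he : e = 1 ∨ e = -1) :
    (Mmat a e).map (Int.cast : ℤ → ZMod 2) = !![0,1;1,0] := by
  rw [Mmat, map_fin_two]
  refine fin2eq ?_ ?_ (by simp) (by simp)
  · rw [ZMod.intCast_zmod_eq_zero_iff_dvd]; exact_mod_cast ha.two_dvd
  · rcases he with h | h <;> subst h <;> decide

lemma fwd (n : ℕ) (hn : 2 ≤ n) (a e : ℕ → ℤ)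
    (ha : ∀ i < n, 0 < a i ∧ Even (a i)) (he : ∀ i < n, e i = 1 ∨ e i = -1) :
    ∃ p' p q' q ε : ℤ, (ε = 1 ∨ ε = -1) ∧
      ((List.range n).map (fun i => Mmat (a i) (e i))).prod = !![p', p*ε; q', q*ε] ∧
      p < p' ∧ q < p ∧ 0 < q ∧ q < q' ∧ p - q ≤ p' - q' ∧
      ((!![p', p*ε; q', q*ε] : Matrix (Fin 2) (Fin 2) ℤ).map (Int.cast : ℤ → ZMod 2) = 1 ∨
        (!![p', p*ε; q', q*ε] : Matrix (Fin 2) (Fin 2) ℤ).map (Int.cast : ℤ → ZMod 2) = !![0,1;1,0]) := by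
  induction n, hn using Nat.le_induction with
  | base =>
    obtain ⟨ha0, hea0⟩ := ha 0 (by norm_num)
    obtain ⟨ha1, hea1⟩ := ha 1 (by norm_num)
    have he0 := he 0 (by norm_num)
    have he1 := he 1 (by norm_num)
    have ha0' : 2 ≤ a 0 := by rcases hea0 with ⟨k, hk⟩; omega
    have ha1' : 2 ≤ a 1 := by rcases hea1 with ⟨k, hk⟩; omega
    refine ⟨a 0 * a 1 + e 0, a 0, a 1, 1, e 1, he1, ?_, ?_, by linarith, one_pos, by linarith, ?_, ?_⟩
    · show Mmat (a 0) (e 0) * (Mmat (a 1) (e 1) * 1) = _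
      rw [mul_one, Mmat, Mmat, Matrix.mul_fin_two]
      exact fin2eq (by ring) (by ring) (by ring) (by ring)
    · rcases he0 with h | h <;> nlinarith
    · rcases he0 with h | h <;> nlinarith
    · left
      have h2 : (!![a 0 * a 1 + e 0, a 0 * e 1; a 1, 1 * e 1] : Matrix (Fin 2) (Fin 2) ℤ)
          = Mmat (a 0) (e 0) * Mmat (a 1) (e 1) := by
        rw [Mmat, Mmat, Matrix.mul_fin_two]
        exact fin2eq (by ring) (by ring) (by ring) (by ring)
      rw [h2, map_mul2, mmat_map _ _ hea0 he0, mmat_map _ _ hea1 he1]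
      decide
  | succ n hn ih =>
    obtain ⟨p', p, q', q, ε, hε, hprod, h1, h2, h3, h4, h5, hm⟩ :=
      ih (fun i hi => ha i (by omega)) (fun i hi => he i (by omega))
    obtain ⟨han, hean⟩ := ha n (by omega)
    have hen := he n (by omega)
    have han' : 2 ≤ a n := by rcases hean with ⟨k, hk⟩; omega
    have hrange : ((List.range (n+1)).map (fun i => Mmat (a i) (e i))).prod
        = !![p', p*ε; q', q*ε] * Mmat (a n) (e n) := by
      rw [List.range_succ, List.map_append, List.prod_append, hprod]
      simp
    have hmul : (!![p', p*ε; q', q*ε] : Matrix (Fin 2) (Fin 2) ℤ) * Mmat (a n) (e n)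
        = !![a n * p' + p*ε, p' * (e n); a n * q' + q*ε, q' * (e n)] := by
      rw [Mmat, Matrix.mul_fin_two]
      exact fin2eq (by ring) (by ring) (by ring) (by ring)
    have hq'p' : q' < p' := by linarith
    refine ⟨a n * p' + p*ε, p', a n * q' + q*ε, q', e n, hen, ?_, ?_, hq'p', by linarith, ?_, ?_, ?_⟩
    · rw [hrange, hmul]
    · rcases hε with h | h <;> subst h <;> nlinarith
    · rcases hε with h | h <;> subst h <;> nlinarith
    · rcases hε with h | h <;> subst h <;> nlinarith
    · have hstep : (!![a n * p' + p*ε, p' * (e n); a n * q' + q*ε, q' * (e n)] : Matrix (Fin 2) (Fin 2) ℤ).map (Int.cast : ℤ → ZMod 2)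
          = (!![p', p*ε; q', q*ε] : Matrix (Fin 2) (Fin 2) ℤ).map Int.cast * (Mmat (a n) (e n)).map Int.cast := by
        rw [← map_mul2, hmul]
      rw [hstep, mmat_map _ _ hean hen]
      rcases hm with h | h <;> rw [h]
      · right; rw [Matrix.one_mul]
      · left; decide

lemma Jcancel (A B : Matrix (Fin 2) (Fin 2) (ZMod 2)) (h : A = !![0,1;1,0] * B) :
    B = !![0,1;1,0] * A := by
  rw [h, ← Matrix.mul_assoc,
    show (!![0,1;1,0] : Matrix (Fin 2) (Fin 2) (ZMod 2)) * !![0,1;1,0] = 1 by decide,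
    Matrix.one_mul]

lemma bwd (N : ℕ) : ∀ (p' p q' q ε : ℤ), q.toNat ≤ N →
    (ε = 1 ∨ ε = -1) → q < p → 0 < q → q < q' →
    (p' * q - p * q' = 1 ∨ p' * q - p * q' = -1) →
    ((!![p', p*ε; q', q*ε] : Matrix (Fin 2) (Fin 2) ℤ).map (Int.cast : ℤ → ZMod 2) = 1 ∨
      (!![p', p*ε; q', q*ε] : Matrix (Fin 2) (Fin 2) ℤ).map (Int.cast : ℤ → ZMod 2) = !![0,1;1,0]) →
    ∃ n ≥ 2, ∃ a e : ℕ → ℤ, (∀ i < n, 0 < a i ∧ Even (a i)) ∧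
      (∀ i < n, e i = 1 ∨ e i = -1) ∧
      (!![p', p*ε; q', q*ε] : Matrix (Fin 2) (Fin 2) ℤ)
        = ((List.range n).map (fun i => Mmat (a i) (e i))).prod := by
  induction N with
  | zero => intro p' p q' q ε hN _ _ hq0 _ _ _; omega
  | succ N ih =>
    intro p' p q' q ε hN hε hqp hq0 hqq' hδ hm
    have hcε : ((ε : ℤ) : ZMod 2) = 1 := by rcases hε with h|h <;> subst h <;> decide
    -- extract parity information
    have hP : (((p' : ℤ) : ZMod 2) = 1 ∧ ((p : ℤ) : ZMod 2) = 0 ∧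
               ((q' : ℤ) : ZMod 2) = 0 ∧ ((q : ℤ) : ZMod 2) = 1) ∨
              (((p' : ℤ) : ZMod 2) = 0 ∧ ((p : ℤ) : ZMod 2) = 1 ∧
               ((q' : ℤ) : ZMod 2) = 1 ∧ ((q : ℤ) : ZMod 2) = 0) := by
      rcases hm with h | h
      · left
        rw [map_fin_two, Matrix.one_fin_two] at h
        have h00 := congrFun (congrFun h 0) 0
        have h01 := congrFun (congrFun h 0) 1
        have h10 := congrFun (congrFun h 1) 0
        have h11 := congrFun (congrFun h 1) 1
        simp [hcε] at h00 h01 h10 h11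
        exact ⟨h00, h01, h10, h11⟩
      · right
        rw [map_fin_two] at h
        have h00 := congrFun (congrFun h 0) 0
        have h01 := congrFun (congrFun h 0) 1
        have h10 := congrFun (congrFun h 1) 0
        have h11 := congrFun (congrFun h 1) 1
        simp [hcε] at h00 h01 h10 h11
        exact ⟨h00, h01, h10, h11⟩
    rcases eq_or_lt_of_le (show (1:ℤ) ≤ q from hq0) with hq1 | hq2
    · -- base case : q = 1
      have hq1' : q = 1 := hq1.symm
      subst hq1'
      have hpar : ((p : ℤ) : ZMod 2) = 0 ∧ ((q' : ℤ) : ZMod 2) = 0 := by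
        rcases hP with ⟨_, h1, h2, _⟩ | ⟨_, _, _, h3⟩
        · exact ⟨h1, h2⟩
        · exfalso; rw [show ((1:ℤ) : ZMod 2) = 1 from rfl] at h3; exact one_ne_zero h3
      have hEp : Even p := by
        have hd : (2:ℤ) ∣ p := by
          have := (ZMod.intCast_zmod_eq_zero_iff_dvd p 2).mp (by exact_mod_cast hpar.1)
          exact_mod_cast this
        obtain ⟨k, hk⟩ := hd; exact ⟨k, by omega⟩
      have hEq' : Even q' := by
        have hd : (2:ℤ) ∣ q' := by
          have := (ZMod.intCast_zmod_eq_zero_iff_dvd q' 2).mp (by exact_mod_cast hpar.2)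
          exact_mod_cast this
        obtain ⟨k, hk⟩ := hd; exact ⟨k, by omega⟩
      have hδ' : p' - p * q' = 1 ∨ p' - p * q' = -1 := by
        rcases hδ with h | h <;> [left; right] <;> linarith
      refine ⟨2, le_refl 2, (fun i => if i = 0 then p else q'),
        (fun i => if i = 0 then p' - p * q' else ε), ?_, ?_, ?_⟩
      · intro i hi
        interval_cases i
        · simpa using ⟨by linarith, hEp⟩
        · simpa using ⟨by linarith, hEq'⟩
      · intro i hi
        interval_cases i
        · simpa using hδ'
        · simpa using hε
      · show _ = Mmat p (p' - p * q') * (Mmat q' ε * 1)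
        rw [mul_one, Mmat, Mmat, Matrix.mul_fin_two]
        exact fin2eq (by ring) (by ring) (by ring) (by ring)
    · -- inductive step : q ≥ 2
      have hq2' : 2 ≤ q := hq2
      have hqndvd : ¬ (q ∣ p) := by
        intro hdvd
        have h1 : q ∣ p' * q - p * q' := by
          exact dvd_sub (dvd_mul_left q p') (hdvd.mul_right q')
        have h2 : q ∣ 1 := by
          rcases hδ with h | h
          · rwa [h] at h1
          · rw [h] at h1; exact dvd_neg.mp h1
        have := Int.le_of_dvd one_pos h2
        omega
      -- choose the even partial quotient
      set t : ℤ := (p + q) / (2 * q) with ht_def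
      have h2q : (0:ℤ) < 2 * q := by linarith
      have hmod := Int.mul_ediv_add_emod (p + q) (2 * q)
      have hm0 : 0 ≤ (p + q) % (2 * q) := Int.emod_nonneg _ (by omega)
      have hm1 : (p + q) % (2 * q) < 2 * q := Int.emod_lt_of_pos _ h2q
      have hmne : (p + q) % (2 * q) ≠ 0 := by
        intro h0
        have : (2 * q) ∣ (p + q) := Int.dvd_of_emod_eq_zero h0
        have hq' : q ∣ p + q := dvd_trans ⟨2, by ring⟩ this
        exact hqndvd ((dvd_add_right (dvd_refl q)).mp (by rwa [add_comm] at hq'))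
      set r' : ℤ := p - 2 * t * q with hr'_def
      have hr'1 : r' = (p + q) % (2 * q) - q := by rw [hr'_def]; linarith [hmod]
      have hr'lt : r' < q := by omega
      have hr'gt : -q < r' := by omega
      have hr'ne : r' ≠ 0 := by
        intro h0
        exact hqndvd ⟨2 * t, by linarith⟩
      have ht1 : 1 ≤ t := by nlinarith [hmod, hm1]
      set e : ℤ := if 0 < r' then 1 else -1 with he_def
      set r : ℤ := if 0 < r' then r' else -r' with hr_def
      have he : e = 1 ∨ e = -1 := by rw [he_def]; split_ifs <;> simp
      have hee : e * e = 1 := by rcases he with h | h <;> rw [h] <;> ring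
      have her : e * r' = r := by
        rw [he_def, hr_def]; split_ifs <;> ring
      clear_value t r'
      have hr0 : 0 < r := by rw [hr_def]; split_ifs with h <;> omega
      have hrq : r < q := by rw [hr_def]; split_ifs with h <;> omega
      clear_value e r
      set s : ℤ := e * (p' - 2 * t * q') with hs_def
      clear_value s
      -- key identity
      have hkey : s * q = e * (p' * q - p * q') + r * q' := by
        rw [← her, hs_def, hr'_def]; ring
      have heδ : e * (p' * q - p * q') = 1 ∨ e * (p' * q - p * q') = -1 := by
        rcases he with h | h <;> rcases hδ with h' | h' <;> rw [h, h'] <;> norm_num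
      have heδ1 : -1 ≤ e * (p' * q - p * q') ∧ e * (p' * q - p * q') ≤ 1 := by
        rcases heδ with h | h <;> rw [h] <;> norm_num
      obtain ⟨hd1, hd2⟩ := heδ1
      have hs_pos : 0 < s := by nlinarith [hkey]
      have hs_lt : s < q' := by nlinarith [hkey]
      have hrs : r ≤ s := by nlinarith [hkey]
      -- parity : s ≠ r
      have hce : ((e : ℤ) : ZMod 2) = 1 := by rcases he with h | h <;> rw [h] <;> decide
      have hs2 : ((s : ℤ) : ZMod 2) = ((p' : ℤ) : ZMod 2) := by
        rw [hs_def]; push_cast; rw [hce]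
        have h2 : (2 : ZMod 2) = 0 := rfl
        rw [h2]; ring
      have hr2 : ((r : ℤ) : ZMod 2) = ((p : ℤ) : ZMod 2) := by
        rw [← her, hr'_def]; push_cast; rw [hce]
        have h2 : (2 : ZMod 2) = 0 := rfl
        rw [h2]; ring
      have hsr : r ≠ s := by
        intro h0
        have : ((p : ℤ) : ZMod 2) = ((p' : ℤ) : ZMod 2) := by rw [← hs2, ← hr2, h0]
        rcases hP with ⟨hA, hB, _, _⟩ | ⟨hA, hB, _, _⟩ <;> rw [hA, hB] at this <;>
          exact (by decide : ¬ ((0 : ZMod 2) = 1 ∨ (1 : ZMod 2) = 0))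
            (by first | exact Or.inr this | exact Or.inl this)
      have hrs' : r < s := lt_of_le_of_ne hrs hsr
      -- the factorization
      have hes : e * s = p' - 2 * t * q' := by rw [hs_def, ← mul_assoc, hee, one_mul]
      have her2 : e * r = p - 2 * t * q := by
        rw [← her, ← mul_assoc, hee, one_mul, hr'_def]
      have hfact : (!![p', p*ε; q', q*ε] : Matrix (Fin 2) (Fin 2) ℤ)
          = Mmat (2 * t) e * !![q', q*ε; s, r*ε] := by
        rw [Mmat, Matrix.mul_fin_two]
        refine fin2eq ?_ ?_ (by ring) (by ring)
        · have : 2 * t * q' + e * s = p' := by rw [hes]; ring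
          linarith [this]
        · have h1 : 2 * t * q + e * r = p := by rw [her2]; ring
          linear_combination (-ε) * h1
      -- new det condition
      have hδ' : q' * r - q * s = 1 ∨ q' * r - q * s = -1 := by
        rcases heδ with h | h
        · right; linarith [hkey, h]
        · left; linarith [hkey, h]
      -- new parity condition
      have hm' : ((!![q', q*ε; s, r*ε] : Matrix (Fin 2) (Fin 2) ℤ).map (Int.cast : ℤ → ZMod 2) = 1 ∨
          (!![q', q*ε; s, r*ε] : Matrix (Fin 2) (Fin 2) ℤ).map (Int.cast : ℤ → ZMod 2) = !![0,1;1,0]) := by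
        have hEa : Even (2 * t) := ⟨t, by ring⟩
        have hmap : (!![p', p*ε; q', q*ε] : Matrix (Fin 2) (Fin 2) ℤ).map (Int.cast : ℤ → ZMod 2)
            = !![0,1;1,0] * (!![q', q*ε; s, r*ε] : Matrix (Fin 2) (Fin 2) ℤ).map Int.cast := by
          rw [hfact, map_mul2, mmat_map _ _ hEa he]
        have h2 := Jcancel _ _ hmap
        rcases hm with h | h
        · right; rw [h2, h, Matrix.mul_one]
        · left; rw [h2, h]; decide
      -- recursive call
      have hNr : r.toNat ≤ N := by clear * - hrq hr0 hN hq0; omega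
      obtain ⟨n, hn2, a', e', ha', he', hprod'⟩ :=
        ih q' q s r ε hNr hε hrq hr0 hrs' hδ' hm'
      refine ⟨n + 1, by omega, (fun i => if i = 0 then 2 * t else a' (i - 1)),
        (fun i => if i = 0 then e else e' (i - 1)), ?_, ?_, ?_⟩
      · intro i hi
        rcases Nat.eq_zero_or_pos i with h0 | h0
        · subst h0
          have h2t : (0:ℤ) < 2 * t := by linarith
          have hE : Even (2 * t) := ⟨t, by ring⟩
          refine ⟨?_, ?_⟩
          · simpa using h2t
          · simpa using hE
        · have := ha' (i - 1) (by omega)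
          simp only [if_neg (by omega : ¬ i = 0)]
          exact this
      · intro i hi
        rcases Nat.eq_zero_or_pos i with h0 | h0
        · subst h0; simpa using he
        · have := he' (i - 1) (by omega)
          simp only [if_neg (by omega : ¬ i = 0)]
          exact this
      · rw [List.range_succ_eq_map, List.map_cons, List.prod_cons, List.map_map]
        have hfun : ((fun i => Mmat (if i = 0 then 2 * t else a' (i - 1))
              (if i = 0 then e else e' (i - 1))) ∘ Nat.succ)
            = fun i => Mmat (a' i) (e' i) := by
          funext i
          simp [Function.comp]
        rw [hfun]
        rw [← hprod', hfact]
        simp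

theorem stmt12 (σ : Matrix (Fin 2) (Fin 2) ℤ) (hdet : σ.det = 1 ∨ σ.det = -1) :
    (∃ n ≥ 2, ∃ a e : ℕ → ℤ, (∀ i < n, 0 < a i ∧ Even (a i)) ∧
        (∀ i < n, e i = 1 ∨ e i = -1) ∧
        σ = ((List.range n).map (fun i => Mmat (a i) (e i))).prod) ↔
    (∃ p' p q' q ee : ℤ, (ee = 1 ∨ ee = -1) ∧ σ = !![p', p * ee; q', q * ee] ∧
        p < p' ∧ q < p ∧ 0 < q ∧ q' < p' ∧ q < q' ∧
        (σ.map (Int.cast : ℤ → ZMod 2) = 1 ∨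
          σ.map (Int.cast : ℤ → ZMod 2) = !![0, 1; 1, 0])) := by
  constructor
  · rintro ⟨n, hn, a, e, ha, he, hσ⟩
    obtain ⟨p', p, q', q, ε, hε, hprod, h1, h2, h3, h4, h5, hm⟩ := fwd n hn a e ha he
    refine ⟨p', p, q', q, ε, hε, by rw [hσ, hprod], h1, h2, h3, by linarith, h4, ?_⟩
    rw [hσ, hprod]; exact hm
  · rintro ⟨p', p, q', q, ε, hε, hσ, h1, h2, h3, h4, h5, hm⟩
    have hδ : p' * q - p * q' = 1 ∨ p' * q - p * q' = -1 := by
      rw [hσ, Matrix.det_fin_two_of] at hdet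
      rcases hε with h | h <;> subst h <;> rcases hdet with h | h
      · left; linear_combination h
      · right; linear_combination h
      · right; linear_combination -h
      · left; linear_combination -h
    have hm' := hm
    rw [hσ] at hm'
    obtain ⟨n, hn, a, e, ha, he, hprod⟩ :=
      bwd q.toNat p' p q' q ε le_rfl hε h2 h3 h5 hδ hm'
    exact ⟨n, hn, a, e, ha, he, by rw [hσ]; exact hprod⟩
end
end

section
/- Let Δ ≡ 1 (mod 4) and let ω be an E-reduced quadratic irrational of discriminant Δ. Then every σ ∈ Θ̃ with σ·ω = ω satisfies σ ≡ I₂ (mod 2), and the image of the stabilizer Θ̃_ω under the map (a,b;c,d) ↦ cω+d equals ℱ_Δ = {t + u√Δ : t, u ∈ ℤ, t² − Δu² = ±1}; that is, {cω+d : (a,b;c,d) ∈ Θ̃, σ·ω = ω} = ℱ_Δ. -/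
noncomputable section

lemma zmod2_zero_iff (n : ℤ) : ((n : ZMod 2) = 0) ↔ Even n := by
  rw [ZMod.intCast_zmod_eq_zero_iff_dvd, Int.even_iff]
  omega

lemma zmod2_one_iff (n : ℤ) : ((n : ZMod 2) = 1) ↔ Odd n := by
  rcases Int.even_or_odd n with h | h
  · rw [(zmod2_zero_iff n).2 h]
    simp [Int.not_odd_iff_even.2 h]
  · obtain ⟨k, hk⟩ := h
    subst hk
    have h2 : ((2 : ℤ) : ZMod 2) = 0 := by decide
    have : ((2*k+1 : ℤ) : ZMod 2) = ((2:ℤ):ZMod 2) * (k:ZMod 2) + 1 := by push_cast; ring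
    rw [this, h2, zero_mul, zero_add]
    simp [Int.odd_iff]

lemma lin_int_zero (ω : ℝ) (hirr : Irrational ω) (m n : ℤ)
    (h : (m:ℝ) * ω + n = 0) : m = 0 ∧ n = 0 := by
  by_cases hm : m = 0
  · subst hm; simp at h; exact ⟨rfl, by exact_mod_cast h⟩
  · exfalso
    have hm' : (m:ℝ) ≠ 0 := Int.cast_ne_zero.mpr hm
    have : ω = ((-n : ℚ) / (m : ℚ) : ℚ) := by
      push_cast
      field_simp
      linarith
    exact hirr ⟨_, this.symm⟩

lemma quad_prop (ω : ℝ) (hirr : Irrational ω) (A B C p q r : ℤ) (hA : 0 < A)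
    (hgcd : Int.gcd (Int.gcd A B : ℤ) C = 1)
    (h1 : (A:ℝ) * ω ^ 2 + B * ω + C = 0)
    (h2 : (p:ℝ) * ω ^ 2 + q * ω + r = 0) :
    ∃ u : ℤ, p = u * A ∧ q = u * B ∧ r = u * C := by
  have hlin : ((A*q - p*B : ℤ) : ℝ) * ω + ((A*r - p*C : ℤ) : ℝ) = 0 := by
    push_cast
    linear_combination (A : ℝ) * h2 - (p : ℝ) * h1
  obtain ⟨e1, e2⟩ := lin_int_zero ω hirr _ _ hlin
  have hq : A * q = p * B := by omega
  have hr : A * r = p * C := by omega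
  have hb1 : (Int.gcd A B : ℤ) = A * Int.gcdA A B + B * Int.gcdB A B := Int.gcd_eq_gcd_ab A B
  have hb2 : (Int.gcd (Int.gcd A B : ℤ) C : ℤ) =
      (Int.gcd A B : ℤ) * Int.gcdA (Int.gcd A B : ℤ) C + C * Int.gcdB (Int.gcd A B : ℤ) C :=
    Int.gcd_eq_gcd_ab _ _
  have hone : (1 : ℤ) = (A * Int.gcdA A B + B * Int.gcdB A B) * Int.gcdA (Int.gcd A B : ℤ) C
      + C * Int.gcdB (Int.gcd A B : ℤ) C := by
    rw [← hb1, ← hb2, hgcd]; rfl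
  set x := Int.gcdA A B
  set y := Int.gcdB A B
  set X := Int.gcdA (Int.gcd A B : ℤ) C
  set Y := Int.gcdB (Int.gcd A B : ℤ) C
  have hA0 : A ≠ 0 := by omega
  refine ⟨p * x * X + q * y * X + r * Y, ?_, ?_, ?_⟩
  · linear_combination p * hone - (y * X) * hq - Y * hr
  · have : A * q = A * ((p * x * X + q * y * X + r * Y) * B) := by
      linear_combination hq + B * p * hone - B*y*X*hq - B*Y*hr
    exact mul_left_cancel₀ hA0 this
  · have : A * r = A * ((p * x * X + q * y * X + r * Y) * C) := by
      linear_combination hr + C * p * hone - C*y*X*hq - C*Y*hr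
    exact mul_left_cancel₀ hA0 this

lemma map_one_of_parity (m : Matrix (Fin 2) (Fin 2) ℤ)
    (h00 : Odd (m 0 0)) (h01 : Even (m 0 1)) (h10 : Even (m 1 0)) (h11 : Odd (m 1 1)) :
    m.map (Int.cast : ℤ → ZMod 2) = 1 := by
  ext i j
  fin_cases i <;> fin_cases j <;>
    simp [Matrix.map_apply, Matrix.one_apply, zmod2_one_iff, zmod2_zero_iff, *]

lemma pell_parity (Δ t u : ℤ) (hΔodd : Δ % 2 = 1)
    (h : t^2 - Δ*u^2 = 1 ∨ t^2 - Δ*u^2 = -1) :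
    (Odd t ∧ Even u) ∨ (Even t ∧ Odd u) := by
  have hodd : Odd (t^2 - Δ*u^2) := by rcases h with h|h <;> rw [h] <;> decide
  have hΔo : Odd Δ := Int.odd_iff.mpr hΔodd
  rcases Int.even_or_odd t with ht|ht <;> rcases Int.even_or_odd u with hu|hu
  · exfalso
    have h1 : Even (t^2) := by rw [sq]; exact ht.mul_right t
    have h2 : Even (Δ*u^2) := (by rw [sq]; exact hu.mul_right u : Even (u^2)).mul_left Δ
    exact (Int.not_odd_iff_even.mpr (Int.even_sub.mpr (by tauto))) hodd
  · exact Or.inr ⟨ht, hu⟩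
  · exact Or.inl ⟨ht, hu⟩
  · exfalso
    have h1 : Odd (t^2) := ht.pow
    have h2 : Odd (Δ*u^2) := hΔo.mul hu.pow
    have : Even (t^2 - Δ*u^2) := Int.even_sub.mpr
      (by simp [Int.not_even_iff_odd.2 h1, Int.not_even_iff_odd.2 h2])
    exact (Int.not_even_iff_odd.2 hodd) this

theorem stmt13 (Δ : ℤ) (hΔ : Δ % 4 = 1) (ω : ℝ) (hω : 1 < ω)
    (hdisc : HasDisc ω Δ)
    (hred : ∃ ω' : ℝ, IsConjPair ω ω' ∧ -1 < ω' ∧ ω' < 1) :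
    (∀ σ : Matrix (Fin 2) (Fin 2) ℤ, IsTheta σ → moebius σ ω = ω →
        σ.map (Int.cast : ℤ → ZMod 2) = 1) ∧
    {x : ℝ | ∃ σ : Matrix (Fin 2) (Fin 2) ℤ, IsTheta σ ∧ moebius σ ω = ω ∧
        x = (σ 1 0 : ℝ) * ω + (σ 1 1 : ℝ)} =
      {x : ℝ | ∃ t u : ℤ, (t ^ 2 - Δ * u ^ 2 = 1 ∨ t ^ 2 - Δ * u ^ 2 = -1) ∧
        x = (t : ℝ) + (u : ℝ) * Real.sqrt (Δ : ℝ)} := by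
  obtain ⟨hirr, A, B, C, hA, hgcd, hroot, hΔdef⟩ := hdisc
  obtain ⟨ω', ⟨hirr', A', B', C', hA', hgcd', hr1, hr2, hne'⟩, hω1, hω2⟩ := hred
  obtain ⟨w, hwA, hwB, hwC⟩ := quad_prop ω hirr A B C A' B' C' hA hgcd hroot hr1
  have hw0 : w ≠ 0 := by rintro rfl; simp at hwA; omega
  have hroot' : (A:ℝ) * ω' ^ 2 + B * ω' + C = 0 := by
    rw [hwA, hwB, hwC] at hr2
    push_cast at hr2
    have hmul : (w:ℝ) * ((A:ℝ) * ω' ^ 2 + B * ω' + C) = 0 := by linear_combination hr2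
    rcases mul_eq_zero.mp hmul with h | h
    · exact absurd (by exact_mod_cast h) hw0
    · exact h
  have hsum : (A:ℝ) * (ω + ω') + B = 0 := by
    have hd : ω - ω' ≠ 0 := sub_ne_zero.mpr hne'.symm
    have hfac : (ω - ω') * ((A:ℝ) * (ω + ω') + B) = 0 := by
      linear_combination hroot - hroot'
    rcases mul_eq_zero.mp hfac with h | h
    · exact absurd h hd
    · exact h
  have hApos : (0:ℝ) < A := by exact_mod_cast hA
  have hs_pos : 0 < 2*(A:ℝ)*ω + B := by
    have he : 2*(A:ℝ)*ω + B = (A:ℝ) * (ω - ω') := by linarith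
    rw [he]
    have : 0 < ω - ω' := by linarith
    positivity
  have hDr : (Δ:ℝ) = (B:ℝ)^2 - 4*A*C := by exact_mod_cast hΔdef
  have hsq : (Δ:ℝ) = (2*(A:ℝ)*ω + B)^2 := by
    linear_combination hDr - 4*(A:ℝ)*hroot
  have hsqrt : Real.sqrt (Δ:ℝ) = 2*(A:ℝ)*ω + B := by
    rw [hsq]
    exact Real.sqrt_sq hs_pos.le
  have hirr_sqrt : Irrational (Real.sqrt (Δ:ℝ)) := by
    rw [hsqrt]
    have h1 : Irrational (((2*A : ℤ):ℝ) * ω + ((B:ℤ):ℝ)) :=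
      ((Irrational.intCast_mul hirr (by omega)).add_intCast B)
    have he : 2*(A:ℝ)*ω + B = ((2*A:ℤ):ℝ)*ω + ((B:ℤ):ℝ) := by push_cast; ring
    rw [he]; exact h1
  have hBodd : Odd B := by
    rcases Int.even_or_odd B with ⟨k, hk⟩ | h
    · exfalso
      have : Δ = 4*(k*k - A*C) := by rw [hΔdef, hk]; ring
      omega
    · exact h
  -- the key forward analysis
  have key : ∀ σ : Matrix (Fin 2) (Fin 2) ℤ, IsTheta σ → moebius σ ω = ω →
      (Odd (σ 0 0) ∧ Even (σ 0 1) ∧ Even (σ 1 0) ∧ Odd (σ 1 1)) ∧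
      ∃ t v : ℤ, (t^2 - Δ*v^2 = 1 ∨ t^2 - Δ*v^2 = -1) ∧
        (σ 1 0 : ℝ) * ω + (σ 1 1 : ℝ) = t + v * Real.sqrt (Δ:ℝ) := by
    intro σ hθ hmo
    set a := σ 0 0 with ha
    set b := σ 0 1 with hb
    set c := σ 1 0 with hc
    set d := σ 1 1 with hd
    have hne0 : (c:ℝ)*ω + d ≠ 0 := by
      intro h0
      rw [moebius, ← ha, ← hb, ← hc, ← hd, h0, div_zero] at hmo
      linarith
    have hnum : (a:ℝ)*ω + b = ω * ((c:ℝ)*ω + d) := by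
      rw [moebius, ← ha, ← hb, ← hc, ← hd, div_eq_iff hne0] at hmo
      linarith [hmo]
    have h2 : (c:ℝ) * ω ^ 2 + ((d - a : ℤ):ℝ) * ω + ((-b : ℤ):ℝ) = 0 := by
      push_cast
      linear_combination -hnum
    obtain ⟨u, huc, hud, hub⟩ := quad_prop ω hirr A B C c (d-a) (-b) hA hgcd hroot h2
    obtain ⟨hdet1, hmap⟩ := hθ
    have heps : a*d - b*c = 1 ∨ a*d - b*c = -1 := by
      rwa [Matrix.det_fin_two] at hdet1
    have hda_even : Even (d - a) := by
      rcases hmap with h | h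
      · have e1 : Odd a := (zmod2_one_iff a).mp (by
          have := congrFun (congrFun h 0) 0
          simpa [Matrix.map_apply, Matrix.one_apply] using this)
        have e2 : Odd d := (zmod2_one_iff d).mp (by
          have := congrFun (congrFun h 1) 1
          simpa [Matrix.map_apply, Matrix.one_apply] using this)
        exact Int.even_sub.mpr
          (by simp [Int.not_even_iff_odd.2 e1, Int.not_even_iff_odd.2 e2])
      · have e1 : Even a := (zmod2_zero_iff a).mp (by
          have := congrFun (congrFun h 0) 0
          simpa [Matrix.map_apply] using this)
        have e2 : Even d := (zmod2_zero_iff d).mp (by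
          have := congrFun (congrFun h 1) 1
          simpa [Matrix.map_apply] using this)
        exact Int.even_sub.mpr (by tauto)
    have hueven : Even u := by
      rw [hud] at hda_even
      rcases Int.even_mul.mp hda_even with h | h
      · exact h
      · exact absurd h (Int.not_even_iff_odd.mpr hBodd)
    obtain ⟨v, hv⟩ := hueven
    have hu2 : u = 2*v := by omega
    have hd2 : d = a + 2*v*B := by linear_combination hud + B*hu2
    have hc2 : c = 2*v*A := by linear_combination huc + A*hu2
    have hb2 : b = -(2*v*C) := by linear_combination -hub - C*hu2
    have hbeven : Even b := ⟨-(v*C), by rw [hb2]; ring⟩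
    have hceven : Even c := ⟨v*A, by rw [hc2]; ring⟩
    have hbc_even : Even (b*c) := hbeven.mul_right c
    have had_odd : Odd (a*d) := by
      rcases Int.even_or_odd (a*d) with h | h
      · exfalso
        have he : Even (a*d - b*c) := Int.even_sub.mpr (by tauto)
        rcases heps with hh | hh
        · rw [hh] at he; exact (by decide : ¬ Even (1:ℤ)) he
        · rw [hh] at he; exact (by decide : ¬ Even (-1:ℤ)) he
      · exact h
    obtain ⟨hao, hdo⟩ := Int.odd_mul.mp had_odd
    refine ⟨⟨hao, hbeven, hceven, hdo⟩, a + v*B, v, ?_, ?_⟩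
    · have hval : (a + v*B)^2 - Δ*v^2 = a*d - b*c := by
        rw [hd2, hb2, hc2]
        linear_combination (-(v^2)) * hΔdef
      rw [hval]
      exact heps
    · rw [hsqrt, hc2, hd2]
      push_cast
      ring
  constructor
  · intro σ hθ hmo
    obtain ⟨⟨h00, h01, h10, h11⟩, _⟩ := key σ hθ hmo
    exact map_one_of_parity σ h00 h01 h10 h11
  · ext x
    simp only [Set.mem_setOf_eq]
    constructor
    · rintro ⟨σ, hθ, hmo, hx⟩
      obtain ⟨_, t, v, hpell, hval⟩ := key σ hθ hmo
      exact ⟨t, v, hpell, by rw [hx, hval]⟩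
    · rintro ⟨t, u, hpell, hx⟩
      have hΔodd : Δ % 2 = 1 := by omega
      set σ₀ : Matrix (Fin 2) (Fin 2) ℤ := !![t - u*B, -(2*u*C); 2*u*A, t + u*B] with hσ₀
      have E00 : σ₀ 0 0 = t - u*B := rfl
      have E01 : σ₀ 0 1 = -(2*u*C) := rfl
      have E10 : σ₀ 1 0 = 2*u*A := rfl
      have E11 : σ₀ 1 1 = t + u*B := rfl
      have hden : ((2*u*A : ℤ):ℝ)*ω + ((t + u*B : ℤ):ℝ) ≠ 0 := by
        have hexp : ((2*u*A : ℤ):ℝ)*ω + ((t + u*B : ℤ):ℝ) = t + u * Real.sqrt (Δ:ℝ) := by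
          rw [hsqrt]; push_cast; ring
        rw [hexp]
        intro h0
        by_cases hu : u = 0
        · subst hu
          simp at h0
          have ht0 : t = 0 := by exact_mod_cast h0
          subst ht0
          simp at hpell
        · apply hirr_sqrt
          refine ⟨((-t : ℚ) / (u : ℚ)), ?_⟩
          have hu' : (u:ℝ) ≠ 0 := Int.cast_ne_zero.mpr hu
          push_cast
          field_simp
          linarith
      refine ⟨σ₀, ⟨?_, ?_⟩, ?_, ?_⟩
      · rw [hσ₀, Matrix.det_fin_two_of]
        have hval : (t - u*B)*(t + u*B) - -(2*u*C)*(2*u*A) = t^2 - Δ*u^2 := by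
          linear_combination (u^2) * hΔdef
        rw [hval]
        exact hpell
      · left
        refine map_one_of_parity σ₀ ?_ ?_ ?_ ?_
        · rw [E00]
          rcases pell_parity Δ t u hΔodd hpell with ⟨ht, hu⟩ | ⟨ht, hu⟩
          · obtain ⟨k, hk⟩ := ht
            obtain ⟨l, hl⟩ := hu.mul_right B
            exact ⟨k - l, by omega⟩
          · obtain ⟨k, hk⟩ := ht
            obtain ⟨l, hl⟩ := hu.mul hBodd
            exact ⟨k - l - 1, by omega⟩
        · rw [E01]; exact ⟨-(u*C), by ring⟩
        · rw [E10]; exact ⟨u*A, by ring⟩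
        · rw [E11]
          rcases pell_parity Δ t u hΔodd hpell with ⟨ht, hu⟩ | ⟨ht, hu⟩
          · obtain ⟨k, hk⟩ := ht
            obtain ⟨l, hl⟩ := hu.mul_right B
            exact ⟨k + l, by omega⟩
          · obtain ⟨k, hk⟩ := ht
            obtain ⟨l, hl⟩ := hu.mul hBodd
            exact ⟨k + l, by omega⟩
      · rw [moebius, E00, E01, E10, E11, div_eq_iff hden]
        push_cast
        linear_combination (-2*(u:ℝ)) * hroot
      · rw [E10, E11, hx, hsqrt]
        push_cast
        ring
end
end

section
/- Let ω be an E-reduced quadratic irrational with minimal T_E-period n and ECF digits (a₁,e₁),…,(aₙ,eₙ), and let Ω_E(ω) = M(a₁,e₁)···M(aₙ,eₙ). Let σ = (a,b;c,d) ∈ Θ̃ satisfy σ·ω = ω. (i) If c ≥ d ≥ 1, then eₙ = +1 and σ = Ω_E(ω)^k for some integer k ≥ 1. (ii) If c ≥ −d ≥ 1, then eₙ = −1 and σ = Ω_E(ω)^k for some integer k ≥ 1. -/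
noncomputable section

/-- The least period of `ω` under `T_E` (junk value `0` if `ω` is not periodic). -/
def perE (ω : ℝ) : ℕ := sInf {n : ℕ | 0 < n ∧ TE^[n] ω = ω}

/-- `Ω_E(ω) = M(a₁,e₁) ⋯ M(aₙ,eₙ)`, where `n = per(ω)` and `(aᵢ, eᵢ)` are the
ECF digits of `ω`. -/
def OmegaE (ω : ℝ) : Matrix (Fin 2) (Fin 2) ℤ :=
  ((List.range (perE ω)).map (fun i => Mmat (aE (TE^[i] ω)) (eE (TE^[i] ω)))).prod


/-! basic lemmas -/

lemma eE_cases (u : ℝ) : eE u = 1 ∨ eE u = -1 := by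
  unfold eE; split <;> simp

lemma irr_linear {x : ℝ} (hx : Irrational x) {p q : ℚ} (h : (p : ℝ) * x + q = 0) :
    p = 0 ∧ q = 0 := by
  by_cases hp : p = 0
  · refine ⟨hp, ?_⟩
    rw [hp] at h; push_cast at h
    have : (q:ℝ) = 0 := by linarith
    exact_mod_cast this
  · exfalso
    have hp' : (p : ℝ) ≠ 0 := by exact_mod_cast hp
    have hx' : x = ((-q / p : ℚ) : ℝ) := by push_cast; field_simp; linarith
    exact (Rat.not_irrational _) (hx' ▸ hx)

lemma irr_linear_int {x : ℝ} (hx : Irrational x) {p q : ℤ} (h : (p : ℝ) * x + q = 0) :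
    p = 0 ∧ q = 0 := by
  have := irr_linear hx (p := (p:ℚ)) (q := (q:ℚ)) (by push_cast; exact_mod_cast h)
  exact ⟨by exact_mod_cast this.1, by exact_mod_cast this.2⟩

lemma sub_aE_lt (u : ℝ) : u - aE u < 1 := by
  have := Int.lt_floor_add_one ((u+1)/2)
  unfold aE; push_cast; linarith

lemma neg_one_le_sub_aE (u : ℝ) : -1 ≤ u - aE u := by
  have := Int.floor_le ((u+1)/2)
  unfold aE; push_cast; linarith

lemma sub_aE_ne (u : ℝ) (hu : Irrational u) : u - aE u ≠ 0 := by
  intro h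
  have : u = ((aE u : ℚ) : ℝ) := by push_cast; linarith
  exact (Rat.not_irrational _) (this ▸ hu)

lemma neg_one_lt_sub_aE (u : ℝ) (hu : Irrational u) : -1 < u - aE u := by
  rcases lt_or_eq_of_le (neg_one_le_sub_aE u) with h | h
  · exact h
  · exfalso
    have : u = (((aE u : ℚ) - 1 : ℚ) : ℝ) := by push_cast; linarith
    exact (Rat.not_irrational _) (this ▸ hu)

lemma sub_aE_pos_of (u : ℝ) (h : eE u = 1) : 0 < u - aE u := by
  unfold eE at h; split at h
  · linarith [show (aE u : ℝ) < u from by assumption]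
  · simp at h

lemma sub_aE_neg_of (u : ℝ) (hu : Irrational u) (h : eE u = -1) : u - aE u < 0 := by
  unfold eE at h; split at h
  · simp at h
  · rcases lt_or_eq_of_le (not_lt.mp (by assumption)) with h' | h'
    · linarith
    · exact absurd h' (fun h'' => sub_aE_ne u hu (by linarith))

lemma eE_mul_sub_pos (u : ℝ) (hu : Irrational u) : 0 < (eE u : ℝ) * (u - aE u) := by
  rcases eE_cases u with h | h <;> rw [h] <;> push_cast
  · nlinarith [sub_aE_pos_of u h]
  · nlinarith [sub_aE_neg_of u hu h]

lemma eE_mul_sub_lt_one (u : ℝ) (hu : Irrational u) : (eE u : ℝ) * (u - aE u) < 1 := by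
  rcases eE_cases u with h | h <;> rw [h] <;> push_cast
  · linarith [sub_aE_lt u]
  · linarith [neg_one_lt_sub_aE u hu]

lemma one_lt_TE (u : ℝ) (hu : Irrational u) : 1 < TE u := by
  unfold TE
  rcases eE_cases u with h | h <;> rw [h] <;> push_cast
  · rw [lt_div_iff₀ (sub_aE_pos_of u h)]
    linarith [sub_aE_lt u]
  · have h1 := sub_aE_neg_of u hu h
    rw [lt_div_iff_of_neg h1]
    linarith [neg_one_lt_sub_aE u hu]

lemma TE_irrational (u : ℝ) (hu : Irrational u) : Irrational (TE u) := by
  rintro ⟨q, hq⟩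
  have hne := sub_aE_ne u hu
  unfold TE at hq
  rw [eq_div_iff hne] at hq
  have h2 : ((q:ℚ):ℝ) * u + ((-(q * aE u) - eE u : ℚ) : ℝ) = 0 := by
    push_cast
    linear_combination hq
  have h3 := irr_linear hu h2
  have hq0 : q = 0 := by exact_mod_cast h3.1
  have h4 : -(q * (aE u:ℚ)) - eE u = 0 := h3.2
  rw [hq0] at h4
  rcases eE_cases u with h | h <;> rw [h] at h4 <;> norm_num at h4

lemma denom_ne {m : Matrix (Fin 2) (Fin 2) ℤ} {x : ℝ} (hdet : m.det ≠ 0)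
    (hx : Irrational x) : (m 1 0 : ℝ) * x + m 1 1 ≠ 0 := by
  intro h
  have h2 := irr_linear_int hx h
  rw [Matrix.det_fin_two, h2.1, h2.2] at hdet
  simp at hdet

lemma moebius_eq {a b c d : ℤ} {x : ℝ} :
    moebius !![a,b;c,d] x = ((a:ℝ) * x + b) / ((c:ℝ) * x + d) := by
  unfold moebius; simp

lemma moebius_irrational {m : Matrix (Fin 2) (Fin 2) ℤ} {x : ℝ} (hdet : m.det ≠ 0)
    (hx : Irrational x) : Irrational (moebius m x) := by
  rintro ⟨q, hq⟩
  have hden := denom_ne hdet hx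
  unfold moebius at hq
  rw [eq_div_iff hden] at hq
  have h2 : (((m 0 0 : ℤ) - q * m 1 0 : ℚ) : ℝ) * x + (((m 0 1 : ℤ) - q * m 1 1 : ℚ) : ℝ) = 0 := by
    push_cast
    linear_combination -hq
  have h3 := irr_linear hx h2
  have e1 : ((m 0 0 : ℤ) : ℚ) = q * m 1 0 := by linarith [sub_eq_zero.mp h3.1]
  have e2 : ((m 0 1 : ℤ) : ℚ) = q * m 1 1 := by linarith [sub_eq_zero.mp h3.2]
  apply hdet
  have : ((m.det : ℤ) : ℚ) = 0 := by
    rw [Matrix.det_fin_two]; push_cast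
    linear_combination (m 1 1 : ℚ) * e1 - (m 1 0 : ℚ) * e2
  exact_mod_cast this

lemma moebius_mul_s14 (m n : Matrix (Fin 2) (Fin 2) ℤ) (x : ℝ) (hm : m.det ≠ 0) (hn : n.det ≠ 0)
    (hx : Irrational x) : moebius (m * n) x = moebius m (moebius n x) := by
  have hdn := denom_ne hn hx
  have hmn : (m*n).det ≠ 0 := by rw [Matrix.det_mul]; exact mul_ne_zero hm hn
  have hdmn := denom_ne hmn hx
  set y := moebius n x with hy'
  have hyv : y = ((n 0 0:ℝ)*x + n 0 1)/((n 1 0:ℝ)*x + n 1 1) := rfl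
  have key : ((m 1 0 : ℝ) * y + m 1 1) * ((n 1 0 : ℝ) * x + n 1 1)
      = ((m*n) 1 0 : ℝ) * x + (m*n) 1 1 := by
    rw [hyv]
    rw [add_mul, mul_assoc, div_mul_cancel₀ _ hdn]
    simp only [Matrix.mul_apply, Fin.sum_univ_two]
    push_cast; ring
  have keyN : ((m 0 0 : ℝ) * y + m 0 1) * ((n 1 0 : ℝ) * x + n 1 1)
      = ((m*n) 0 0 : ℝ) * x + (m*n) 0 1 := by
    rw [hyv]
    rw [add_mul, mul_assoc, div_mul_cancel₀ _ hdn]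
    simp only [Matrix.mul_apply, Fin.sum_univ_two]
    push_cast; ring
  show moebius (m*n) x = moebius m y
  unfold moebius
  rw [← keyN, ← key, mul_div_mul_right _ _ hdn]

def Minv (a e : ℤ) : Matrix (Fin 2) (Fin 2) ℤ := !![0, 1; e, -(a*e)]

lemma Mmat_mul_Minv (a e : ℤ) (he : e = 1 ∨ e = -1) : Mmat a e * Minv a e = 1 := by
  unfold Mmat Minv
  rw [Matrix.mul_fin_two]
  rcases he with h | h <;> subst h <;> norm_num <;> exact Matrix.one_fin_two.symm

lemma det_Mmat (a e : ℤ) : (Mmat a e).det = -e := by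
  unfold Mmat; rw [Matrix.det_fin_two_of]; ring

lemma det_Minv (a e : ℤ) : (Minv a e).det = -e := by
  unfold Minv; rw [Matrix.det_fin_two_of]; ring

lemma moebius_Minv (u : ℝ) (hu : Irrational u) :
    moebius (Minv (aE u) (eE u)) u = TE u := by
  unfold Minv moebius TE
  simp
  have hne := sub_aE_ne u hu
  rcases eE_cases u with h | h <;> rw [h] <;> push_cast
  · rw [show (1:ℝ)*u + -(↑(aE u)*1) = u - ↑(aE u) by ring, one_div]
  · rw [show (-1:ℝ)*u + -(↑(aE u)*(-1)) = -(u - ↑(aE u)) by ring, inv_neg,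
      show (-1:ℝ)/(u - ↑(aE u)) = -((u - ↑(aE u))⁻¹) by rw [neg_div, one_div]]

-- ZMod 2 entry extraction
lemma map_entry {m : Matrix (Fin 2) (Fin 2) ℤ} {n : Matrix (Fin 2) (Fin 2) (ZMod 2)}
    (h : m.map (Int.cast : ℤ → ZMod 2) = n) (i j : Fin 2) : ((m i j : ZMod 2)) = n i j := by
  rw [← h]; simp [Matrix.map_apply]

lemma theta_entries {a b c d : ℤ} (hθ : IsTheta !![a,b;c,d]) :
    ((a : ZMod 2) = 1 ∧ (b : ZMod 2) = 0 ∧ (c : ZMod 2) = 0 ∧ (d : ZMod 2) = 1) ∨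
    ((a : ZMod 2) = 0 ∧ (b : ZMod 2) = 1 ∧ (c : ZMod 2) = 1 ∧ (d : ZMod 2) = 0) := by
  rcases hθ.2 with h | h
  · left
    refine ⟨?_, ?_, ?_, ?_⟩ <;>
      [have := map_entry h 0 0; have := map_entry h 0 1; have := map_entry h 1 0;
       have := map_entry h 1 1] <;> simpa [Matrix.one_apply] using this
  · right
    refine ⟨?_, ?_, ?_, ?_⟩ <;>
      [have := map_entry h 0 0; have := map_entry h 0 1; have := map_entry h 1 0;
       have := map_entry h 1 1] <;> simpa using this

lemma theta_of_entries {a b c d : ℤ} (hdet : a*d - b*c = 1 ∨ a*d - b*c = -1)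
    (h : ((a : ZMod 2) = 1 ∧ (b : ZMod 2) = 0 ∧ (c : ZMod 2) = 0 ∧ (d : ZMod 2) = 1) ∨
    ((a : ZMod 2) = 0 ∧ (b : ZMod 2) = 1 ∧ (c : ZMod 2) = 1 ∧ (d : ZMod 2) = 0)) :
    IsTheta !![a,b;c,d] := by
  constructor
  · rwa [Matrix.det_fin_two_of]
  · rcases h with ⟨h1,h2,h3,h4⟩ | ⟨h1,h2,h3,h4⟩
    · left
      ext i j
      fin_cases i <;> fin_cases j <;>
        simp [Matrix.map_apply, Matrix.one_apply, h1, h2, h3, h4]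
    · right
      ext i j
      fin_cases i <;> fin_cases j <;>
        simp [Matrix.map_apply, h1, h2, h3, h4]

lemma aE_even_mod (u : ℝ) : ((aE u : ℤ) : ZMod 2) = 0 := by
  unfold aE; push_cast; simp
  exact Or.inl (by decide)

lemma eE_mod (u : ℝ) : ((eE u : ℤ) : ZMod 2) = 1 := by
  rcases eE_cases u with h | h <;> rw [h] <;> decide

lemma aE_eq_of {w : ℝ} (k : ℤ) (h1 : 2*(k:ℝ) - 1 ≤ w) (h2 : w < 2*k + 1) : aE w = 2*k := by
  unfold aE
  have : ⌊(w+1)/2⌋ = k := by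
    rw [Int.floor_eq_iff]
    constructor <;> push_cast <;> [linarith; linarith]
  rw [this]

def Pmat (w : ℝ) (m : ℕ) : Matrix (Fin 2) (Fin 2) ℤ :=
  ((List.range m).map (fun i => Mmat (aE (TE^[i] w)) (eE (TE^[i] w)))).prod

lemma Pmat_succ_left (w : ℝ) (m : ℕ) :
    Pmat w (m+1) = Mmat (aE w) (eE w) * Pmat (TE w) m := by
  unfold Pmat
  rw [List.range_succ_eq_map, List.map_cons, List.prod_cons, List.map_map]
  have h2 : (fun i => Mmat (aE (TE^[i] w)) (eE (TE^[i] w))) ∘ Nat.succ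
      = fun i => Mmat (aE (TE^[i] (TE w))) (eE (TE^[i] (TE w))) := by
    funext i
    simp [Function.comp, Function.iterate_succ_apply]
  rw [h2]
  simp [Pmat]

lemma keyD_bounds (c' d' cR dR dd t E D v : ℝ)
    (hE0 : 0 < E) (hE1 : E < 1) (ht1 : -1 ≤ t) (ht2 : t ≤ 1) (hD1 : 1 < D)
    (hcR2 : 2 ≤ cR) (hdd0 : 0 ≤ dd) (hdabs1 : -dd ≤ dR) (hdabs2 : dR ≤ dd)
    (hddR : dd ≤ cR - 1) (hv1 : 1 < v)
    (hDdef : D = cR*v + dR)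
    (key1 : c'*D = t + E*(cR*D)) (key2 : d'*D = -t*v + E*(dR*D)) :
    (-1 < c') ∧ (c' < cR + 1) ∧ (d' < dd + 1) ∧ (-(dd+1) < d') := by
  have hD0 : (0:ℝ) < D := by linarith
  have hv0 : (0:ℝ) < v := by linarith
  have hvltD : v < D := by nlinarith
  have hcD : 0 < cR*D := by nlinarith
  have hEcD0 : 0 < E*(cR*D) := mul_pos hE0 hcD
  have hEcD1 : E*(cR*D) < cR*D := by nlinarith
  have hq1 : dR*D ≤ dd*D := mul_le_mul_of_nonneg_right hdabs2 (le_of_lt hD0)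
  have hq1' : -(dd*D) ≤ dR*D := by nlinarith [mul_le_mul_of_nonneg_right hdabs1 (le_of_lt hD0)]
  have hddD0 : 0 ≤ dd*D := mul_nonneg hdd0 (le_of_lt hD0)
  have hq2 : E*(dR*D) ≤ dd*D := by
    have s1 := mul_le_mul_of_nonneg_left hq1 (le_of_lt hE0)
    have s2 : E*(dd*D) ≤ 1*(dd*D) := mul_le_mul_of_nonneg_right (le_of_lt hE1) hddD0
    nlinarith [s1, s2]
  have hq2' : -(dd*D) ≤ E*(dR*D) := by
    have s1 := mul_le_mul_of_nonneg_left hq1' (le_of_lt hE0)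
    have s2 : E*(dd*D) ≤ 1*(dd*D) := mul_le_mul_of_nonneg_right (le_of_lt hE1) hddD0
    nlinarith [s1, s2]
  have hq3 : -t*v ≤ v := by nlinarith [mul_nonneg (by linarith : (0:ℝ) ≤ 1 + t) (le_of_lt hv0)]
  have hq3' : -v ≤ -t*v := by nlinarith [mul_nonneg (by linarith : (0:ℝ) ≤ 1 - t) (le_of_lt hv0)]
  refine ⟨?_, ?_, ?_, ?_⟩
  · have h2 : (-1)*D < c'*D := by linarith [key1, ht1, hEcD0, hD1]
    exact lt_of_mul_lt_mul_right h2 hD0.le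
  · have h2 : c'*D < (cR+1)*D := by linarith [key1, ht2, hEcD1, hD1]
    exact lt_of_mul_lt_mul_right h2 hD0.le
  · have h2 : d'*D < (dd+1)*D := by linarith [key2, hq3, hq2, hvltD]
    exact lt_of_mul_lt_mul_right h2 hD0.le
  · have h2 : (-(dd+1))*D < d'*D := by linarith [key2, hq3', hq2', hvltD]
    exact lt_of_mul_lt_mul_right h2 hD0.le

theorem keyD : ∀ N : ℕ, ∀ a b c d : ℤ, ∀ v w : ℝ, Irrational v → Irrational w → 1 < v →
    IsTheta !![a,b;c,d] → c ≤ (N:ℤ) → 1 ≤ c → |d| < c → moebius !![a,b;c,d] v = w →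
    ∃ m : ℕ, 1 ≤ m ∧ !![a,b;c,d] = Pmat w m ∧ TE^[m] w = v := by
  intro N
  induction N with
  | zero =>
    intro a b c d v w _ _ _ _ hcN hc _ _
    exfalso; omega
  | succ N ih =>
    intro a b c d v w hv hw hv1 hθ hcN hc1 hdc hmoe
    have hdet : a*d - b*c = 1 ∨ a*d - b*c = -1 := by
      have := hθ.1; rwa [Matrix.det_fin_two_of] at this
    rcases eq_or_lt_of_le hc1 with hc1' | hc2
    · -- base case c = 1
      have hc : c = 1 := hc1'.symm
      subst hc
      have hd0 : d = 0 := by have := abs_lt.mp hdc; omega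
      subst hd0
      have hb : b = 1 ∨ b = -1 := by rcases hdet with h | h <;> omega
      -- parity: a even
      have hpar := theta_entries hθ
      have haeven : (2:ℤ) ∣ a := by
        rcases hpar with ⟨_,_,h3,_⟩ | ⟨h1,_,_,_⟩
        · exfalso; revert h3; decide
        · rw [show (2:ℤ) = ((2:ℕ):ℤ) by norm_num]
          exact (ZMod.intCast_zmod_eq_zero_iff_dvd a 2).mp h1
      obtain ⟨k, hk⟩ := haeven
      have hv0 : (0:ℝ) < v := by linarith
      have hwv : w = (a:ℝ) + b/v := by
        rw [moebius_eq] at hmoe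
        field_simp at hmoe ⊢
        simp only [Int.cast_one, Int.cast_zero, mul_one, add_zero] at hmoe
        linarith [hmoe]
      have hbv1 : (b:ℝ)/v < 1 ∧ -1 < (b:ℝ)/v := by
        have h1v : (0:ℝ) < 1/v := by positivity
        have h1v' : 1/v < 1 := by rw [div_lt_one hv0]; linarith
        rcases hb with h | h <;> subst h <;> push_cast <;> constructor
        · linarith
        · linarith
        · rw [neg_div]; linarith
        · rw [neg_div]; linarith
      have haE : aE w = a := by
        rw [hk]
        apply aE_eq_of
        · push_cast [hwv, hk]; linarith [hbv1.2]
        · push_cast [hwv, hk]; linarith [hbv1.1]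
      have h1v : (0:ℝ) < 1/v := by positivity
      have heE : eE w = b := by
        rcases hb with h | h <;> subst h
        · have hlt : (aE w : ℝ) < w := by
            rw [haE, hwv]; push_cast; linarith
          unfold eE; rw [if_pos hlt]
        · have hlt : ¬ ((aE w : ℝ) < w) := by
            rw [haE, hwv]; push_cast; push_neg
            rw [neg_div]; linarith
          unfold eE; rw [if_neg hlt]
      refine ⟨1, le_refl 1, ?_, ?_⟩
      · unfold Pmat
        simp [Mmat, show List.range 1 = [0] from rfl, haE, heE]
      · have hb0 : (b:ℝ) ≠ 0 := by rcases hb with h|h <;> subst h <;> norm_num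
        have : TE w = v := by
          unfold TE
          rw [haE, heE, hwv]
          rw [show (a:ℝ) + b/v - a = b/v by ring]
          have hvne : v ≠ 0 := ne_of_gt hv0
          have hb0' : (b:ℝ)/v ≠ 0 := div_ne_zero hb0 hvne
          rw [div_eq_iff hb0']
          field_simp
        simpa using this
    · -- step case c ≥ 2
      have hc2 : 2 ≤ c := hc2
      have hd_le : |d| ≤ c - 1 := by omega
      have hd_lt : -c < d ∧ d < c := abs_lt.mp hdc
      -- digits of w
      have he1 := eE_cases w
      have hE0 : 0 < (eE w : ℝ) * (w - aE w) := eE_mul_sub_pos w hw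
      have hE1 : (eE w : ℝ) * (w - aE w) < 1 := eE_mul_sub_lt_one w hw
      set a₁ := aE w with ha₁
      set e₁ := eE w with he₁
      set c' := e₁ * (a - a₁ * c) with hc'
      set d' := e₁ * (b - a₁ * d) with hd'
      clear_value c' d'
      -- denominator facts
      have hcd1 : (1:ℤ) ≤ c + d := by omega
      have hcd1R : (1:ℝ) ≤ (c:ℝ) + d := by exact_mod_cast hcd1
      have hcR2 : (2:ℝ) ≤ (c:ℝ) := by exact_mod_cast hc2
      have hD1 : (1:ℝ) < (c:ℝ)*v + d := by nlinarith
      have hD0 : (0:ℝ) < (c:ℝ)*v + d := by linarith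
      have havB : (a:ℝ)*v + b = w * ((c:ℝ)*v + d) := by
        rw [moebius_eq] at hmoe
        rw [div_eq_iff (ne_of_gt hD0)] at hmoe
        linarith [hmoe]
      -- the sign unit t = e₁ * det
      have hdetR : ((a:ℝ)*d - b*c = 1 ∧ (a*d - b*c : ℤ) = 1) ∨ ((a:ℝ)*d - b*c = -1 ∧ (a*d - b*c : ℤ) = -1) := by
        rcases hdet with h | h
        · left; exact ⟨by exact_mod_cast h, h⟩
        · right; exact ⟨by exact_mod_cast h, h⟩
      have he1R : (e₁:ℝ) = 1 ∨ (e₁:ℝ) = -1 := by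
        rcases he1 with h | h <;> [left; right] <;> rw [h] <;> norm_num
      -- key polynomial identities
      have key1 : ((c':ℤ):ℝ) * ((c:ℝ)*v + d)
          = (e₁:ℝ)*((a:ℝ)*d - b*c) + ((e₁:ℝ)*(w - a₁)) * ((c:ℝ)*((c:ℝ)*v + d)) := by
        rw [hc']
        push_cast
        linear_combination ((e₁:ℝ)*c) * havB
      have key2 : ((d':ℤ):ℝ) * ((c:ℝ)*v + d)
          = -((e₁:ℝ)*((a:ℝ)*d - b*c))*v + ((e₁:ℝ)*(w - a₁)) * ((d:ℝ)*((c:ℝ)*v + d)) := by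
        rw [hd']
        push_cast
        linear_combination ((e₁:ℝ)*d) * havB
      have ht : (e₁:ℝ)*((a:ℝ)*d - b*c) = 1 ∨ (e₁:ℝ)*((a:ℝ)*d - b*c) = -1 := by
        rcases he1R with h | h <;> rcases hdetR with ⟨h2,_⟩ | ⟨h2,_⟩ <;> rw [h, h2] <;> norm_num
      have htabs : -1 ≤ (e₁:ℝ)*((a:ℝ)*d - b*c) ∧ (e₁:ℝ)*((a:ℝ)*d - b*c) ≤ 1 := by
        rcases ht with h | h <;> rw [h] <;> norm_num
      -- bounds via keyD_bounds
      have hddR : ((|d|:ℤ):ℝ) ≤ (c:ℝ) - 1 := by exact_mod_cast hd_le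
      have hdabs1 : -((|d|:ℤ):ℝ) ≤ (d:ℝ) := by exact_mod_cast neg_abs_le d
      have hdabs2 : (d:ℝ) ≤ ((|d|:ℤ):ℝ) := by exact_mod_cast le_abs_self d
      have hddR0 : (0:ℝ) ≤ ((|d|:ℤ):ℝ) := by exact_mod_cast abs_nonneg d
      obtain ⟨B1, B2, B3, B4⟩ := keyD_bounds ((c':ℤ):ℝ) ((d':ℤ):ℝ) (c:ℝ) (d:ℝ) ((|d|:ℤ):ℝ)
        ((e₁:ℝ)*((a:ℝ)*d - b*c)) ((e₁:ℝ)*(w - a₁)) ((c:ℝ)*v + d) v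
        hE0 hE1 htabs.1 htabs.2 hD1 hcR2 hddR0 hdabs1 hdabs2 hddR hv1 rfl key1 key2
      have hc'_pos : 1 ≤ c' := by
        have h1' : (-1:ℤ) < c' := by exact_mod_cast B1
        rcases lt_or_eq_of_le (by omega : (0:ℤ) ≤ c') with h3 | h3
        · omega
        · exfalso
          have he10 : e₁ ≠ 0 := by rcases he1 with h|h <;> omega
          have ha : a = a₁ * c := by
            have h4 : e₁ * (a - a₁ * c) = 0 := by rw [← hc', ← h3]
            rcases mul_eq_zero.mp h4 with h|h
            · exact absurd h he10
            · omega
          have hdvd : c ∣ (a*d - b*c) := ⟨a₁*d - b, by rw [ha]; ring⟩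
          rcases hdet with h | h
          · rw [h] at hdvd
            have := Int.le_of_dvd (by norm_num) hdvd
            omega
          · rw [h] at hdvd
            have := Int.le_of_dvd (by norm_num) (dvd_neg.mp hdvd)
            omega
      have hc'_le : c' ≤ c := by
        have h2 : (c' : ℤ) < c + 1 := by exact_mod_cast B2
        omega
      have hd'_ub : (d' : ℤ) ≤ |d| := by
        have h2 : (d' : ℤ) < |d| + 1 := by exact_mod_cast B3
        omega
      have hd'_lb : -(|d|) ≤ d' := by
        have h2 : -(|d| + 1) < (d' : ℤ) := by exact_mod_cast B4
        omega
      have hd'_abs : |d'| ≤ |d| := abs_le.mpr ⟨hd'_lb, hd'_ub⟩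
      -- parity facts
      have hpar := theta_entries hθ
      have hc'mod : ((c':ℤ) : ZMod 2) = ((a:ℤ) : ZMod 2) := by
        rw [hc']; push_cast
        rw [he₁, ha₁, eE_mod w, aE_even_mod w]; ring
      have hd'mod : ((d':ℤ) : ZMod 2) = ((b:ℤ) : ZMod 2) := by
        rw [hd']; push_cast
        rw [he₁, ha₁, eE_mod w, aE_even_mod w]; ring
      have habs_d'mod : ((|d'|:ℤ) : ZMod 2) = ((d':ℤ) : ZMod 2) := by
        rcases abs_choice d' with h | h <;> rw [h]
        · push_cast; rw [CharTwo.neg_eq]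
      have hc'_ne_c : c' ≠ c := by
        intro h
        have : ((c':ℤ) : ZMod 2) = ((c:ℤ) : ZMod 2) := by rw [h]
        rw [hc'mod] at this
        rcases hpar with ⟨h1,_,h3,_⟩ | ⟨h1,_,h3,_⟩ <;> rw [h1, h3] at this <;> exact absurd this (by decide)
      -- det of the new matrix
      have hdet' : c * d' - d * c' = -(e₁*(a*d - b*c)) := by rw [hc', hd']; ring
      have hdet'2 : c*d' - d*c' = 1 ∨ c*d' - d*c' = -1 := by
        rw [hdet']
        rcases he1 with h | h <;> rcases hdet with h2 | h2 <;> rw [h, h2] <;> norm_num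
      -- |d'| < c'
      have habs_ne : |d'| ≠ c' := by
        intro h
        have : ((|d'|:ℤ) : ZMod 2) = ((c':ℤ) : ZMod 2) := by rw [h]
        rw [habs_d'mod, hd'mod, hc'mod] at this
        rcases hpar with ⟨h1,h2,_,_⟩ | ⟨h1,h2,_,_⟩ <;> rw [h1, h2] at this <;> exact absurd this (by decide)
      have hd'_lt : |d'| < c' := by
        by_contra h
        push_neg at h
        have h2 : c' + 1 ≤ |d'| := by
          rcases lt_or_eq_of_le h with h' | h'
          · omega
          · exact absurd h'.symm habs_ne
        have habs1 : |c*d' - d*c'| = 1 := by rcases hdet'2 with h3|h3 <;> rw [h3] <;> norm_num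
        have h3 : |c*d'| - |d*c'| ≤ |c*d' - d*c'| := abs_sub_abs_le_abs_sub _ _
        rw [abs_mul, abs_mul, abs_of_nonneg (by omega : (0:ℤ) ≤ c),
          abs_of_nonneg (by omega : (0:ℤ) ≤ c')] at h3
        rw [habs1] at h3
        nlinarith [hd_le, h2, hc'_pos, hc2]
      -- theta for the new matrix
      have hθ' : IsTheta !![c, d; c', d'] := by
        apply theta_of_entries hdet'2
        rcases hpar with ⟨h1,h2,h3,h4⟩ | ⟨h1,h2,h3,h4⟩
        · right; exact ⟨h3, h4, by rw [hc'mod, h1], by rw [hd'mod, h2]⟩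
        · left; exact ⟨h3, h4, by rw [hc'mod, h1], by rw [hd'mod, h2]⟩
      -- matrix decomposition
      have hMinv_mul : Minv a₁ e₁ * !![a,b;c,d] = !![c, d; c', d'] := by
        unfold Minv
        rw [Matrix.mul_fin_two, hc', hd']
        ext i j
        fin_cases i <;> fin_cases j <;> simp <;> ring
      have hdetτ : (!![a,b;c,d]).det ≠ 0 := by
        rw [Matrix.det_fin_two_of]
        rcases hdet with h|h <;> rw [h] <;> norm_num
      have hdetM : (Minv a₁ e₁).det ≠ 0 := by
        rw [det_Minv]
        rcases he1 with h|h <;> rw [he₁] at * <;> omega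
      have hmoe' : moebius !![c, d; c', d'] v = TE w := by
        rw [← hMinv_mul, moebius_mul_s14 _ _ _ hdetM hdetτ hv, hmoe, ha₁, he₁, moebius_Minv w hw]
      -- apply induction hypothesis
      obtain ⟨m, hm1, hPm, hTm⟩ := ih c d c' d' v (TE w) hv (TE_irrational w hw) hv1 hθ'
        (by omega) hc'_pos hd'_lt hmoe'
      refine ⟨m + 1, by omega, ?_, ?_⟩
      · rw [Pmat_succ_left, ← hPm, ← hMinv_mul, ← mul_assoc, ← ha₁, ← he₁,
          Mmat_mul_Minv a₁ e₁ (by rw [he₁]; exact eE_cases w), one_mul]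
      · rw [Function.iterate_succ_apply, hTm]

lemma iterate_irrational (ω : ℝ) (hω : Irrational ω) (i : ℕ) : Irrational (TE^[i] ω) := by
  induction i with
  | zero => simpa using hω
  | succ n ih => rw [Function.iterate_succ_apply']; exact TE_irrational _ ih

lemma one_lt_iterate (ω : ℝ) (hω : Irrational ω) (h1 : 1 < ω) (i : ℕ) : 1 < TE^[i] ω := by
  cases i with
  | zero => simpa using h1
  | succ n => rw [Function.iterate_succ_apply']; exact one_lt_TE _ (iterate_irrational ω hω n)

lemma aE_ge_two (u : ℝ) (h1 : 1 < u) : 2 ≤ aE u := by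
  unfold aE
  have : (1:ℤ) ≤ ⌊(u+1)/2⌋ := by
    rw [Int.le_floor]; push_cast; linarith
  omega

lemma Pmat_succ_right (w : ℝ) (m : ℕ) :
    Pmat w (m+1) = Pmat w m * Mmat (aE (TE^[m] w)) (eE (TE^[m] w)) := by
  unfold Pmat
  rw [List.range_succ, List.map_append, List.prod_append]
  simp

lemma Pmat_structure (ω : ℝ) (hω : Irrational ω) (h1 : 1 < ω) :
    ∀ m : ℕ, 1 ≤ m → ∃ p p₂ q q₂ : ℤ,
      Pmat ω m = !![p, eE (TE^[m-1] ω) * p₂; q, eE (TE^[m-1] ω) * q₂] ∧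
      1 ≤ q ∧ 0 ≤ q₂ ∧ q₂ + 1 ≤ q := by
  intro m
  induction m with
  | zero => omega
  | succ m ih =>
    intro _
    rcases Nat.eq_or_lt_of_le (Nat.one_le_iff_ne_zero.mpr (Nat.succ_ne_zero m)) with h | h
    · -- m + 1 = 1
      have hm0 : m = 0 := by omega
      subst hm0
      refine ⟨aE ω, 1, 1, 0, ?_, by norm_num, by norm_num, by norm_num⟩
      unfold Pmat Mmat
      simp [show List.range 1 = [0] from rfl]
    · have hm1 : 1 ≤ m := by omega
      obtain ⟨p, p₂, q, q₂, hP, hq1, hq2, hq3⟩ := ih hm1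
      have ha2 : 2 ≤ aE (TE^[m] ω) := aE_ge_two _ (one_lt_iterate ω hω h1 m)
      have he := eE_cases (TE^[m-1] ω)
      refine ⟨p * aE (TE^[m] ω) + eE (TE^[m-1] ω) * p₂, p,
        q * aE (TE^[m] ω) + eE (TE^[m-1] ω) * q₂, q, ?_, ?_, by omega, ?_⟩
      · rw [Pmat_succ_right, hP]
        unfold Mmat
        rw [Matrix.mul_fin_two]
        have hmm : m + 1 - 1 = m := rfl
        rw [hmm]
        congr 1 <;> ring_nf
      · rcases he with h | h <;> rw [h] <;> nlinarith
      · rcases he with h | h <;> rw [h] <;> nlinarith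

lemma iterate_per_mul (ω : ℝ) (n : ℕ) (hper : TE^[n] ω = ω) (k : ℕ) : TE^[n*k] ω = ω := by
  induction k with
  | zero => simp
  | succ k ih =>
    have : n*(k+1) = n*k + n := by ring
    rw [this, Function.iterate_add_apply, hper, ih]

lemma digit_shift (ω : ℝ) (n : ℕ) (hper : TE^[n] ω = ω) (k i : ℕ) :
    TE^[n*k + i] ω = TE^[i] ω := by
  rw [show n*k + i = i + n*k by ring, Function.iterate_add_apply, iterate_per_mul ω n hper k]

lemma Pmat_pow (ω : ℝ) (n : ℕ) (hper : TE^[n] ω = ω) (k : ℕ) :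
    Pmat ω (n*k) = (Pmat ω n)^k := by
  induction k with
  | zero => simp [Pmat]
  | succ k ih =>
    have h1 : n*(k+1) = n*k + n := by ring
    rw [h1]
    unfold Pmat
    rw [List.range_add, List.map_append, List.prod_append, List.map_map]
    have h2 : ((fun i => Mmat (aE (TE^[i] ω)) (eE (TE^[i] ω))) ∘ fun x => n*k + x)
        = fun i => Mmat (aE (TE^[i] ω)) (eE (TE^[i] ω)) := by
      funext i
      simp [Function.comp, digit_shift ω n hper k i]
    rw [h2]
    show Pmat ω (n*k) * Pmat ω n = _
    rw [ih, pow_succ]; rfl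

lemma per_dvd (ω : ℝ) (m : ℕ) (hm : 0 < m) (hper : TE^[m] ω = ω) :
    0 < perE ω ∧ TE^[perE ω] ω = ω ∧ perE ω ∣ m := by
  have hne : {n : ℕ | 0 < n ∧ TE^[n] ω = ω}.Nonempty := ⟨m, hm, hper⟩
  have hmem := Nat.sInf_mem hne
  set n := sInf {n : ℕ | 0 < n ∧ TE^[n] ω = ω} with hn
  have hn0 : 0 < n := hmem.1
  have hnper : TE^[n] ω = ω := hmem.2
  refine ⟨hn0, hnper, ?_⟩
  have hr : m % n < n := Nat.mod_lt _ hn0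
  have hdiv : m = n * (m / n) + m % n := (Nat.div_add_mod m n).symm
  have hrper : TE^[m % n] ω = ω := by
    have := digit_shift ω n hnper (m / n) (m % n)
    rw [show n * (m/n) + m % n = m from (Nat.div_add_mod m n)] at this
    rw [← this, hper]
  rcases Nat.eq_zero_or_pos (m % n) with h0 | hpos
  · exact Nat.dvd_of_mod_eq_zero h0
  · exfalso
    have : n ≤ m % n := Nat.sInf_le ⟨hpos, hrper⟩
    omega


lemma abs_mod2 (x : ℤ) : ((|x| : ℤ) : ZMod 2) = ((x : ℤ) : ZMod 2) := by
  rcases abs_choice x with h | h <;> rw [h]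
  push_cast; rw [CharTwo.neg_eq]

theorem stmt14 (ω ωs : ℝ) (hω : 1 < ω) (hconj : IsConjPair ω ωs)
    (hred : -1 < ωs ∧ ωs < 1)
    (a b c d : ℤ) (hθ : IsTheta !![a, b; c, d])
    (hfix : moebius !![a, b; c, d] ω = ω) :
    (1 ≤ d → d ≤ c →
      eE (TE^[perE ω - 1] ω) = 1 ∧ ∃ k ≥ 1, !![a, b; c, d] = OmegaE ω ^ k) ∧
    (1 ≤ -d → -d ≤ c →
      eE (TE^[perE ω - 1] ω) = -1 ∧ ∃ k ≥ 1, !![a, b; c, d] = OmegaE ω ^ k) := by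
  obtain ⟨hirr, -⟩ := hconj
  have key : ∀ dd : ℤ, dd = d ∨ dd = -d → 1 ≤ dd → dd ≤ c →
      eE (TE^[perE ω - 1] ω) * dd = d ∧ ∃ k ≥ 1, !![a, b; c, d] = OmegaE ω ^ k := by
    intro dd hdd hdd1 hddc
    have habs : |d| = dd := by rcases hdd with h | h <;> subst h <;> [exact abs_of_pos (by omega); exact abs_of_neg (by omega)] 
    have hpar := theta_entries hθ
    have hd_lt : |d| < c := by
      rcases lt_or_eq_of_le (habs ▸ hddc) with h | h
      · exact h
      · exfalso
        have hmod : ((|d| : ℤ) : ZMod 2) = ((c : ℤ) : ZMod 2) := by rw [h]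
        rw [abs_mod2] at hmod
        rcases hpar with ⟨_,_,h3,h4⟩ | ⟨_,_,h3,h4⟩ <;> rw [h3, h4] at hmod <;>
          exact absurd hmod (by decide)
    have hc1 : 1 ≤ c := by omega
    have hcN : c ≤ ((c.toNat : ℕ) : ℤ) := le_of_eq (Int.toNat_of_nonneg (by omega)).symm
    obtain ⟨m, hm1, hPm, hTm⟩ := keyD c.toNat a b c d ω ω hirr hirr hω hθ hcN hc1 hd_lt hfix
    obtain ⟨hn0, hnper, hdvd⟩ := per_dvd ω m (by omega) hTm
    set n := perE ω with hn
    obtain ⟨k, hk⟩ := hdvd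
    have hk1 : 1 ≤ k := by
      rcases Nat.eq_zero_or_pos k with h | h
      · exfalso; rw [h, Nat.mul_zero] at hk; omega
      · exact h
    -- the power identity
    have hpow : Pmat ω m = OmegaE ω ^ k := by
      rw [hk, Pmat_pow ω n hnper k]
      rfl
    -- structure of Pmat
    obtain ⟨p, p₂, q, q₂, hstr, hq1, hq2, hq3⟩ := Pmat_structure ω hirr hω m hm1
    have hd_entry : d = eE (TE^[m-1] ω) * q₂ := by
      have := hPm.trans hstr
      have h11 := congrFun (congrFun this 1) 1
      simpa using h11
    have hdig : eE (TE^[m-1] ω) = eE (TE^[n-1] ω) := by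
      obtain ⟨k', hk'⟩ : ∃ k', k = k' + 1 := ⟨k - 1, by omega⟩
      have hnk : n * k = n * k' + n := by rw [hk']; ring
      have hm_eq : m - 1 = n * k' + (n - 1) := by omega
      rw [hm_eq, digit_shift ω n hnper k' (n-1)]
    have he := eE_cases (TE^[m-1] ω)
    have hsign : eE (TE^[m-1] ω) * dd = d := by
      rcases hdd with h | h <;> subst h <;> rcases he with h | h <;> rw [h] at hd_entry ⊢ <;> omega
    refine ⟨by rw [← hdig]; exact hsign, k, hk1, by rw [hPm, hpow]⟩
  constructor
  · intro hd1 hdc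
    obtain ⟨hsign, hex⟩ := key d (Or.inl rfl) hd1 hdc
    refine ⟨?_, hex⟩
    rcases eE_cases (TE^[perE ω - 1] ω) with h | h
    · exact h
    · exfalso; rw [h] at hsign; omega
  · intro hd1 hdc
    obtain ⟨hsign, hex⟩ := key (-d) (Or.inr rfl) hd1 hdc
    refine ⟨?_, hex⟩
    rcases eE_cases (TE^[perE ω - 1] ω) with h | h
    · exfalso; rw [h] at hsign; omega
    · exact h
end
end

section
/- Let ω > 1 be a quadratic irrational. Then the conjugate ω* lies in the interval (0,1) (i.e., ω is B-reduced) if and only if ω is a periodic point of the BCF Gauss shift, i.e., there exists n ≥ 1 with T_B^n(ω) = ω. -/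
noncomputable section

/-- The BCF Gauss shift `T_B(u) = 1 / (1 + ⎣u⎦ - u)`. -/
def TB (u : ℝ) : ℝ := 1 / ((1 + ⌊u⌋ : ℤ) - u)

/-! ### Auxiliary lemmas -/

lemma lin_int (x : ℝ) (hx : Irrational x) (m n : ℤ) (h : (m:ℝ)*x + n = 0) : m = 0 ∧ n = 0 := by
  rcases eq_or_ne m 0 with hm | hm
  · subst hm; simp at h; exact ⟨rfl, by exact_mod_cast h⟩
  · exfalso
    have hxr : x = ((-n / m : ℚ) : ℝ) := by
      have hm' : (m:ℝ) ≠ 0 := Int.cast_ne_zero.mpr hm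
      push_cast; field_simp; linarith
    exact hx ⟨_, hxr.symm⟩

lemma gcd3_eq (A B C : ℤ) :
    Int.gcd (Int.gcd A B : ℤ) C = Nat.gcd (Nat.gcd A.natAbs B.natAbs) C.natAbs := by
  unfold Int.gcd
  simp

lemma minpoly_unique (x : ℝ) (hx : Irrational x) (A B C A' B' C' : ℤ)
    (hA : 0 < A) (hA' : 0 < A')
    (hg : Int.gcd (Int.gcd A B : ℤ) C = 1) (hg' : Int.gcd (Int.gcd A' B' : ℤ) C' = 1)
    (he : (A : ℝ) * x ^ 2 + B * x + C = 0) (he' : (A' : ℝ) * x ^ 2 + B' * x + C' = 0) :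
    A = A' ∧ B = B' ∧ C = C' := by
  have key : ((A'*B - A*B' : ℤ) : ℝ) * x + ((A'*C - A*C' : ℤ)) = 0 := by
    push_cast
    linear_combination (A':ℝ) * he - (A:ℝ) * he'
  obtain ⟨h1, h2⟩ := lin_int x hx _ _ key
  have hB : A' * B = A * B' := by omega
  have hC : A' * C = A * C' := by omega
  rw [gcd3_eq] at hg hg'
  have e1 : Nat.gcd (Nat.gcd ((A'*A).natAbs) ((A'*B).natAbs)) ((A'*C).natAbs)
      = A'.natAbs * 1 := by
    simp only [Int.natAbs_mul, Nat.gcd_mul_left, ← hg]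
  have e2 : Nat.gcd (Nat.gcd ((A*A').natAbs) ((A*B').natAbs)) ((A*C').natAbs)
      = A.natAbs * 1 := by
    simp only [Int.natAbs_mul, Nat.gcd_mul_left, ← hg']
  rw [mul_comm A A', ← hB, ← hC] at e2
  have hAA : A = A' := by
    have := e1.symm.trans e2
    omega
  subst hAA
  refine ⟨rfl, ?_, ?_⟩
  · have : A * B = A * B' := by omega
    exact mul_left_cancel₀ (by omega) this
  · have : A * C = A * C' := by omega
    exact mul_left_cancel₀ (by omega) this

lemma sum_eq (ω ωs : ℝ) (A B C : ℤ) (hA : 0 < A) (hne : ωs ≠ ω)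
    (h1 : (A : ℝ) * ω ^ 2 + B * ω + C = 0) (h2 : (A : ℝ) * ωs ^ 2 + B * ωs + C = 0) :
    (A : ℝ) * (ω + ωs) = -B := by
  have hd : ω - ωs ≠ 0 := sub_ne_zero.mpr (fun h => hne h.symm)
  have : ((A:ℝ) * (ω + ωs) + B) * (ω - ωs) = 0 := by linear_combination h1 - h2
  rcases mul_eq_zero.mp this with h | h
  · linarith
  · exact absurd h hd

lemma prod_eq (ω ωs : ℝ) (A B C : ℤ) (hA : 0 < A) (hne : ωs ≠ ω)
    (h1 : (A : ℝ) * ω ^ 2 + B * ω + C = 0) (h2 : (A : ℝ) * ωs ^ 2 + B * ωs + C = 0) :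
    (A : ℝ) * (ω * ωs) = C := by
  have hs := sum_eq ω ωs A B C hA hne h1 h2
  linear_combination ω * hs - h1

lemma conj_unique (ω x y : ℝ) (hx : IsConjPair ω x) (hy : IsConjPair ω y) : x = y := by
  obtain ⟨hirr, A, B, C, hA, hg, he1, he2, hne⟩ := hx
  obtain ⟨-, A', B', C', hA', hg', he1', he2', hne'⟩ := hy
  obtain ⟨rfl, rfl, rfl⟩ := minpoly_unique ω hirr A B C A' B' C' hA hA' hg hg' he1 he1'
  have s1 := sum_eq ω x A B C hA hne he1 he2
  have s2 := sum_eq ω y A B C hA hne' he1' he2'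
  have hA0 : (A:ℝ) ≠ 0 := by positivity
  have := mul_left_cancel₀ hA0 (s1.trans s2.symm)
  linarith

lemma conj_irrational (ω ωs : ℝ) (h : IsConjPair ω ωs) : Irrational ωs := by
  obtain ⟨hirr, A, B, C, hA, hg, he1, he2, hne⟩ := h
  have hs := sum_eq ω ωs A B C hA hne he1 he2
  have hA0 : (A:ℝ) ≠ 0 := by positivity
  intro hr
  obtain ⟨q, hq⟩ := hr
  apply hirr
  refine ⟨(-B : ℚ)/(A:ℚ) - q, ?_⟩
  push_cast
  rw [← hq] at hs
  field_simp
  linarith [hs]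

lemma floor_lt_self (u : ℝ) (hu : Irrational u) : (⌊u⌋ : ℝ) < u := by
  rcases lt_or_eq_of_le (Int.floor_le u) with h | h
  · exact h
  · exact absurd h.symm (hu.ne_int ⌊u⌋)

lemma gap_pos (u : ℝ) (hu : Irrational u) : 0 < ((1 + ⌊u⌋ : ℤ) : ℝ) - u := by
  have := Int.lt_floor_add_one u
  push_cast; linarith

lemma gap_lt_one (u : ℝ) (hu : Irrational u) : ((1 + ⌊u⌋ : ℤ) : ℝ) - u < 1 := by
  have := floor_lt_self u hu
  push_cast; linarith

lemma TB_gt_one (u : ℝ) (hu : Irrational u) : 1 < TB u := by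
  rw [TB, lt_div_iff₀ (gap_pos u hu)]
  simpa using gap_lt_one u hu

lemma root_step (A B C a : ℤ) (x : ℝ) (hx : (a:ℝ) - x ≠ 0)
    (he : (A:ℝ)*x^2 + B*x + C = 0) :
    ((A*a^2+B*a+C : ℤ):ℝ) * (1/((a:ℝ)-x))^2 + ((-(2*A*a+B) : ℤ):ℝ) * (1/((a:ℝ)-x)) + ((A:ℤ):ℝ) = 0 := by
  push_cast
  field_simp
  linear_combination he

lemma prim_trans (A B C A' B' C' : ℤ) (hg : Int.gcd (Int.gcd A B : ℤ) C = 1)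
    (hd : ∀ d : ℤ, d ∣ A' → d ∣ B' → d ∣ C' → (d ∣ A ∧ d ∣ B ∧ d ∣ C)) :
    Int.gcd (Int.gcd A' B' : ℤ) C' = 1 := by
  set g : ℤ := (Int.gcd (Int.gcd A' B' : ℤ) C' : ℤ) with hgdef
  have h1 : g ∣ A' := dvd_trans (Int.gcd_dvd_left _ _) (Int.gcd_dvd_left _ _)
  have h2 : g ∣ B' := dvd_trans (Int.gcd_dvd_left _ _) (Int.gcd_dvd_right _ _)
  have h3 : g ∣ C' := Int.gcd_dvd_right _ _
  obtain ⟨dA, dB, dC⟩ := hd g h1 h2 h3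
  have hdvd : g ∣ ((Int.gcd (Int.gcd A B : ℤ) C : ℕ) : ℤ) := Int.dvd_coe_gcd (Int.dvd_coe_gcd dA dB) dC
  rw [hg] at hdvd
  have hnn : 0 ≤ g := Int.natCast_nonneg _
  rcases Int.isUnit_iff.mp (isUnit_of_dvd_one hdvd) with h | h
  · exact_mod_cast hgdef.symm.trans h
  · exfalso; rw [h] at hnn; omega

lemma TB_irrational (u : ℝ) (hu : Irrational u) : Irrational (TB u) := by
  intro hr
  obtain ⟨q, hq⟩ := hr
  have hgap := gap_pos u hu
  have hq0 : q ≠ 0 := by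
    intro h; rw [h] at hq; simp [TB] at hq
    push_cast at hgap hq
    linarith [hq]
  have hq2 : (q:ℝ) * (((1+⌊u⌋:ℤ):ℝ) - u) = 1 := by
    have h' : (q:ℝ) = TB u := hq
    rw [TB] at h'
    rw [h']
    have hne : ((1+⌊u⌋:ℤ):ℝ) - u ≠ 0 := ne_of_gt hgap
    rw [one_div, inv_mul_cancel₀ hne]
  apply hu
  refine ⟨((1 + ⌊u⌋ : ℤ):ℚ) - 1/q, ?_⟩
  have hqr : (q:ℝ) ≠ 0 := by exact_mod_cast hq0
  push_cast
  push_cast at hq2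
  field_simp
  linear_combination hq2

/-- data for a quadratic irrational pair with discriminant Δ -/
def Dat (Δ : ℤ) (w s : ℝ) : Prop :=
  ∃ A B C : ℤ, 0 < A ∧ Int.gcd (Int.gcd A B : ℤ) C = 1 ∧
    (A : ℝ) * w ^ 2 + B * w + C = 0 ∧ (A : ℝ) * s ^ 2 + B * s + C = 0 ∧
    B ^ 2 - 4 * A * C = Δ

lemma step_all (Δ : ℤ) (w s : ℝ) (hw : 1 < w) (hirr : Irrational w)
    (hD : Dat Δ w s) (hne : s ≠ w) :
    Dat Δ (TB w) (1/(((1+⌊w⌋:ℤ):ℝ) - s)) ∧ (1/(((1+⌊w⌋:ℤ):ℝ) - s)) ≠ TB w := by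
  obtain ⟨A, B, C, hA, hg, h1, h2, hΔ⟩ := hD
  set a : ℤ := 1 + ⌊w⌋ with ha
  have hpair : IsConjPair w s := ⟨hirr, A, B, C, hA, hg, h1, h2, hne⟩
  have hsirr : Irrational s := conj_irrational w s hpair
  have hgw : (0:ℝ) < (a:ℝ) - w := gap_pos w hirr
  have hgs : (a:ℝ) - s ≠ 0 := by
    intro h
    exact hsirr ⟨(a:ℚ), by push_cast; linarith⟩
  have hsum := sum_eq w s A B C hA hne h1 h2
  have hprod := prod_eq w s A B C hA hne h1 h2
  have hTB : TB w = 1/((a:ℝ) - w) := by rw [TB]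
  have hA'real : ((A*a^2+B*a+C : ℤ):ℝ) = (A:ℝ) * ((a:ℝ)-w) * ((a:ℝ)-s) := by
    push_cast
    linear_combination ((a:ℝ))*hsum - hprod
  have hA'ne : (A*a^2+B*a+C : ℤ) ≠ 0 := by
    intro h
    rw [h] at hA'real
    push_cast at hA'real
    have hprodne : (A:ℝ) * ((a:ℝ)-w) * ((a:ℝ)-s) ≠ 0 :=
      mul_ne_zero (mul_ne_zero (Int.cast_ne_zero.mpr (by omega)) (ne_of_gt hgw)) hgs
    exact hprodne hA'real.symm
  have hne' : (1/(((a:ℤ):ℝ) - s)) ≠ TB w := by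
    rw [hTB]
    intro h
    have h1' : ((a:ℝ) - s) = ((a:ℝ) - w) := by
      have e1 : ((a:ℝ) - s) = 1/(1/((a:ℝ)-s)) := (one_div_one_div _).symm
      have e2 : ((a:ℝ) - w) = 1/(1/((a:ℝ)-w)) := (one_div_one_div _).symm
      rw [e1, e2, h]
    exact hne (by linarith)
  have hroot1 := root_step A B C a w (ne_of_gt hgw) h1
  have hroot2 := root_step A B C a s hgs h2
  have hΔ' : (-(2*A*a+B))^2 - 4*(A*a^2+B*a+C)*A = Δ := by rw [← hΔ]; ring
  rcases lt_or_gt_of_ne hA'ne with hneg | hpos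
  · refine ⟨⟨-(A*a^2+B*a+C), -(-(2*A*a+B)), -A, neg_pos.mpr hneg, ?_, ?_, ?_, by rw [← hΔ']; ring⟩, hne'⟩
    · apply prim_trans A B C _ _ _ hg
      intro d hdA hdB hdC
      rw [dvd_neg] at hdA hdB hdC
      refine ⟨hdC, ?_, ?_⟩
      · have : B = -(-(2*A*a+B)) - 2*a*A := by ring
        rw [this]; exact dvd_sub (dvd_neg.mpr hdB) (Dvd.dvd.mul_left hdC (2*a))
      · have : C = (A*a^2+B*a+C) + a*(-(2*A*a+B)) + a^2*A := by ring
        rw [this]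
        exact dvd_add (dvd_add hdA (Dvd.dvd.mul_left hdB a)) (Dvd.dvd.mul_left hdC (a^2))
    · rw [hTB]; push_cast at hroot1 ⊢; linarith
    · push_cast at hroot2 ⊢; linarith
  · refine ⟨⟨(A*a^2+B*a+C), (-(2*A*a+B)), A, hpos, ?_, ?_, ?_, hΔ'⟩, hne'⟩
    · apply prim_trans A B C _ _ _ hg
      intro d hdA hdB hdC
      refine ⟨hdC, ?_, ?_⟩
      · have : B = -(-(2*A*a+B)) - 2*a*A := by ring
        rw [this]; exact dvd_sub (dvd_neg.mpr hdB) (Dvd.dvd.mul_left hdC (2*a))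
      · have : C = (A*a^2+B*a+C) + a*(-(2*A*a+B)) + a^2*A := by ring
        rw [this]
        exact dvd_add (dvd_add hdA (Dvd.dvd.mul_left hdB a)) (Dvd.dvd.mul_left hdC (a^2))
    · rw [hTB]; exact_mod_cast hroot1
    · exact_mod_cast hroot2

/-! ### The sequence of conjugates -/

/-- the conjugate orbit -/
def sSeq (ω ωs : ℝ) : ℕ → ℝ
  | 0 => ωs
  | m+1 => 1 / (((1+⌊TB^[m] ω⌋:ℤ):ℝ) - sSeq ω ωs m)

lemma seq_inv (Δ : ℤ) (ω ωs : ℝ) (hω : 1 < ω) (hirr : Irrational ω)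
    (hD : Dat Δ ω ωs) (hne : ωs ≠ ω) :
    ∀ m, 1 < TB^[m] ω ∧ Irrational (TB^[m] ω) ∧ Dat Δ (TB^[m] ω) (sSeq ω ωs m) ∧
      sSeq ω ωs m ≠ TB^[m] ω := by
  intro m
  induction m with
  | zero => exact ⟨hω, hirr, hD, hne⟩
  | succ k ih =>
    obtain ⟨hw, hwirr, hdat, hne'⟩ := ih
    obtain ⟨hdat', hne''⟩ := step_all Δ _ _ hw hwirr hdat hne'
    rw [Function.iterate_succ_apply']
    exact ⟨TB_gt_one _ hwirr, TB_irrational _ hwirr, hdat', hne''⟩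

lemma floor_ge_one (w : ℝ) (hw : 1 < w) : 1 ≤ ⌊w⌋ :=
  Int.le_floor.mpr (by exact_mod_cast le_of_lt hw)

lemma next_in01 (ω ωs : ℝ) (m : ℕ) (h : sSeq ω ωs m < ((1+⌊TB^[m] ω⌋:ℤ):ℝ) - 1) :
    0 < sSeq ω ωs (m+1) ∧ sSeq ω ωs (m+1) < 1 := by
  have hgt : (1:ℝ) < ((1+⌊TB^[m] ω⌋:ℤ):ℝ) - sSeq ω ωs m := by linarith
  constructor
  · show 0 < 1 / (((1+⌊TB^[m] ω⌋:ℤ):ℝ) - sSeq ω ωs m)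
    positivity
  · show 1 / (((1+⌊TB^[m] ω⌋:ℤ):ℝ) - sSeq ω ωs m) < 1
    rw [div_lt_one (by linarith)]
    exact hgt

lemma pers (ω ωs : ℝ) (hω : 1 < ω) (hiter : ∀ m, 1 < TB^[m] ω) (M : ℕ)
    (hM : 0 < sSeq ω ωs M ∧ sSeq ω ωs M < 1) :
    ∀ k, 0 < sSeq ω ωs (M+k) ∧ sSeq ω ωs (M+k) < 1 := by
  intro k
  induction k with
  | zero => exact hM
  | succ j ih =>
    have hfl := floor_ge_one _ (hiter (M+j))
    have : sSeq ω ωs (M+j) < ((1+⌊TB^[M+j] ω⌋:ℤ):ℝ) - 1 := by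
      have : (1:ℝ) ≤ (⌊TB^[M+j] ω⌋ : ℝ) := by exact_mod_cast hfl
      push_cast
      linarith [ih.2]
    have h2 := next_in01 ω ωs (M+j) this
    have heq : M + (j+1) = (M+j)+1 := by omega
    rw [heq]
    exact h2

/-! ### Injectivity on reduced QIs -/

/-- `u` is a reduced quadratic irrational -/
def Red (u : ℝ) : Prop := 1 < u ∧ ∃ us, IsConjPair u us ∧ 0 < us ∧ us < 1

lemma shift_pair (v vs : ℝ) (k : ℤ) (hp : IsConjPair v vs) : IsConjPair (v + k) (vs + k) := by
  obtain ⟨hirr, A, B, C, hA, hg, h1, h2, hne⟩ := hp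
  refine ⟨by simpa using hirr.add_intCast k, A, B - 2*A*k, A*k^2 - B*k + C, hA, ?_, ?_, ?_, ?_⟩
  · apply prim_trans A B C _ _ _ hg
    intro d hdA hdB hdC
    refine ⟨hdA, ?_, ?_⟩
    · have : B = (B - 2*A*k) + 2*k*A := by ring
      rw [this]; exact dvd_add hdB (Dvd.dvd.mul_left hdA (2*k))
    · have : C = (A*k^2 - B*k + C) + k*(B - 2*A*k) + k^2*A := by ring
      rw [this]
      exact dvd_add (dvd_add hdC (Dvd.dvd.mul_left hdB k)) (Dvd.dvd.mul_left hdA (k^2))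
  · push_cast; linear_combination h1
  · push_cast; linear_combination h2
  · intro h; exact hne (by linarith)

lemma TB_inj (u v us vs : ℝ) (hu : 1 < u) (hv : 1 < v)
    (hpu : IsConjPair u us) (hpv : IsConjPair v vs)
    (hus : 0 < us ∧ us < 1) (hvs : 0 < vs ∧ vs < 1) (h : TB u = TB v) : u = v := by
  have huirr := hpu.1
  have hvirr := hpv.1
  have hgu : (0:ℝ) < ((1+⌊u⌋:ℤ):ℝ) - u := gap_pos u huirr
  have hgv : (0:ℝ) < ((1+⌊v⌋:ℤ):ℝ) - v := gap_pos v hvirr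
  have hgap : ((1+⌊u⌋:ℤ):ℝ) - u = ((1+⌊v⌋:ℤ):ℝ) - v := by
    rw [TB, TB] at h
    have e1 : ((1+⌊u⌋:ℤ):ℝ) - u = 1/(1/(((1+⌊u⌋:ℤ):ℝ) - u)) := (one_div_one_div _).symm
    have e2 : ((1+⌊v⌋:ℤ):ℝ) - v = 1/(1/(((1+⌊v⌋:ℤ):ℝ) - v)) := (one_div_one_div _).symm
    rw [e1, e2, h]
  set k : ℤ := ⌊u⌋ - ⌊v⌋ with hk
  have hkcast : (k:ℝ) = (⌊u⌋:ℝ) - (⌊v⌋:ℝ) := by rw [hk]; push_cast; ring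
  have hkr : u = v + (k:ℝ) := by push_cast at hgap; linarith [hkcast, hgap]
  have hpair2 : IsConjPair u (vs + k) := by
    rw [hkr]; exact shift_pair v vs k hpv
  have husvs : us = vs + k := conj_unique u us (vs + k) hpu hpair2
  have hk0 : k = 0 := by
    have h1 : (k:ℝ) < 1 := by rw [husvs] at hus; linarith [hvs.1, hus.2]
    have h2 : (-1:ℝ) < k := by rw [husvs] at hus; linarith [hvs.2, hus.1]
    have : k < 1 := by exact_mod_cast h1
    have : -1 < k := by exact_mod_cast h2
    omega
  rw [hkr, hk0]; simp

lemma red_step (u : ℝ) (hu : Red u) : Red (TB u) := by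
  obtain ⟨hu1, us, hp, hus0, hus1⟩ := hu
  have huirr := hp.1
  obtain ⟨hirr, A, B, C, hA, hg, h1, h2, hne⟩ := hp
  have hD : Dat (B^2-4*A*C) u us := ⟨A, B, C, hA, hg, h1, h2, rfl⟩
  obtain ⟨hD', hne'⟩ := step_all _ u us hu1 huirr hD hne
  obtain ⟨A', B', C', hA', hg', h1', h2', _⟩ := hD'
  have hfl := floor_ge_one u hu1
  have hgt : (1:ℝ) < ((1+⌊u⌋:ℤ):ℝ) - us := by
    have : (1:ℝ) ≤ (⌊u⌋:ℝ) := by exact_mod_cast hfl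
    push_cast; linarith
  refine ⟨TB_gt_one u huirr, 1/(((1+⌊u⌋:ℤ):ℝ) - us),
    ⟨TB_irrational u huirr, A', B', C', hA', hg', h1', h2', hne'⟩, by positivity, ?_⟩
  rw [div_lt_one (by linarith)]
  exact hgt

lemma red_iter (u : ℝ) (hu : Red u) : ∀ k, Red (TB^[k] u) := by
  intro k
  induction k with
  | zero => exact hu
  | succ j ih => rw [Function.iterate_succ_apply']; exact red_step _ ih

lemma iter_inj (i : ℕ) (u v : ℝ) (hu : Red u) (hv : Red v) (h : TB^[i] u = TB^[i] v) :
    u = v := by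
  induction i generalizing u v with
  | zero => simpa using h
  | succ j ih =>
    obtain ⟨hu1, us, hpu, hus⟩ := hu
    obtain ⟨hv1, vs, hpv, hvs⟩ := hv
    have hru : Red (TB u) := red_step u ⟨hu1, us, hpu, hus⟩
    have hrv : Red (TB v) := red_step v ⟨hv1, vs, hpv, hvs⟩
    rw [Function.iterate_succ_apply, Function.iterate_succ_apply] at h
    have := ih (TB u) (TB v) hru hrv h
    exact TB_inj u v us vs hu1 hv1 hpu hpv hus hvs this

/-! ### Coefficient bounds for reduced QIs -/

lemma bounds (Δ : ℤ) (w s : ℝ) (hw : 1 < w) (hs0 : 0 < s) (hs1 : s < 1) (hne : s ≠ w)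
    (A B C : ℤ) (hA : 0 < A)
    (h1 : (A : ℝ) * w ^ 2 + B * w + C = 0) (h2 : (A : ℝ) * s ^ 2 + B * s + C = 0)
    (hΔ : B ^ 2 - 4 * A * C = Δ) :
    1 ≤ A ∧ A ≤ Δ ∧ 1 ≤ C ∧ C ≤ Δ ∧ -2*Δ ≤ B ∧ B ≤ -1 := by
  have hsum := sum_eq w s A B C hA hne h1 h2
  have hprod := prod_eq w s A B C hA hne h1 h2
  have hAr : (0:ℝ) < (A:ℝ) := by exact_mod_cast hA
  have hC : 1 ≤ C := by
    have : (0:ℝ) < (C:ℝ) := by rw [← hprod]; positivity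
    exact_mod_cast this
  have hδr : ((-B - A - C : ℤ):ℝ) = (A:ℝ)*(w-1)*(1-s) := by
    push_cast
    linear_combination hprod - hsum
  have hδ : 1 ≤ -B - A - C := by
    have : (0:ℝ) < ((-B - A - C : ℤ):ℝ) := by
      rw [hδr]
      apply mul_pos (mul_pos hAr (by linarith)) (by linarith)
    have : (0:ℤ) < -B - A - C := by exact_mod_cast this
    omega
  set δ : ℤ := -B - A - C with hδdef
  have hident : Δ = (A-C)^2 + 2*(A+C)*δ + δ^2 := by rw [← hΔ, hδdef]; ring
  have hsq : 0 ≤ (A-C)^2 := sq_nonneg _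
  have hδsq : δ ≤ δ^2 := by nlinarith
  refine ⟨hA, by nlinarith, hC, by nlinarith, by nlinarith, by omega⟩

/-! ### Main theorem -/

theorem stmt15 (ω ωs : ℝ) (hω : 1 < ω) (hconj : IsConjPair ω ωs) :
    (0 < ωs ∧ ωs < 1) ↔ ∃ n ≥ 1, TB^[n] ω = ω := by
  have hirr := hconj.1
  obtain ⟨-, A₀, B₀, C₀, hA₀, hg₀, he₀1, he₀2, hne₀⟩ := hconj
  set Δ : ℤ := B₀^2 - 4*A₀*C₀ with hΔdef
  have hD : Dat Δ ω ωs := ⟨A₀, B₀, C₀, hA₀, hg₀, he₀1, he₀2, rfl⟩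
  have hconj' : IsConjPair ω ωs := ⟨hirr, A₀, B₀, C₀, hA₀, hg₀, he₀1, he₀2, hne₀⟩
  have hinv := seq_inv Δ ω ωs hω hirr hD hne₀
  have hiter : ∀ m, 1 < TB^[m] ω := fun m => (hinv m).1
  constructor
  · -- reduced → periodic
    rintro ⟨hs0, hs1⟩
    -- every sSeq value is in (0,1)
    have hall : ∀ m, 0 < sSeq ω ωs m ∧ sSeq ω ωs m < 1 := by
      intro m
      have := pers ω ωs hω hiter 0 ⟨hs0, hs1⟩ m
      simpa using this
    -- choose coefficients
    choose Af Bf Cf hAf hgf h1f h2f hΔf using fun m => (hinv m).2.2.1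
    have hmem : ∀ m, (Af m, Bf m, Cf m) ∈ Set.Icc ((1:ℤ), -2*Δ, 1) ((Δ:ℤ), -1, Δ) := by
      intro m
      obtain ⟨b1, b2, b3, b4, b5, b6⟩ := bounds Δ (TB^[m] ω) (sSeq ω ωs m) (hiter m)
        (hall m).1 (hall m).2 (hinv m).2.2.2 (Af m) (Bf m) (Cf m) (hAf m)
        (h1f m) (h2f m) (hΔf m)
      simp only [Set.mem_Icc, Prod.le_def]
      exact ⟨⟨b1, b5, b3⟩, ⟨b2, b6, b4⟩⟩
    obtain ⟨i, -, j, -, hij, heq⟩ :=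
      Set.infinite_univ.exists_ne_map_eq_of_mapsTo
        (fun m _ => hmem m) (Set.finite_Icc _ _)
    -- wlog i < j
    have main : ∀ i j : ℕ, i < j → (Af i, Bf i, Cf i) = (Af j, Bf j, Cf j) →
        ∃ n ≥ 1, TB^[n] ω = ω := by
      intro i j hlt htrip
      have hAe : Af i = Af j := congrArg Prod.fst htrip
      have hBe : Bf i = Bf j := congrArg (fun p => p.2.1) htrip
      have hCe : Cf i = Cf j := congrArg (fun p => p.2.2) htrip
      -- w j is a root of the i-th polynomial
      have hej : (Af i : ℝ) * (TB^[j] ω)^2 + (Bf i) * (TB^[j] ω) + (Cf i) = 0 := by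
        rw [hAe, hBe, hCe]; exact h1f j
      have hsum := sum_eq (TB^[i] ω) (sSeq ω ωs i) (Af i) (Bf i) (Cf i) (hAf i)
        (hinv i).2.2.2 (h1f i) (h2f i)
      have hprod := prod_eq (TB^[i] ω) (sSeq ω ωs i) (Af i) (Bf i) (Cf i) (hAf i)
        (hinv i).2.2.2 (h1f i) (h2f i)
      have hfac : (Af i : ℝ) * ((TB^[j] ω - TB^[i] ω) * (TB^[j] ω - sSeq ω ωs i)) = 0 := by
        linear_combination hej - (TB^[j] ω) * hsum + hprod
      have hwj : TB^[j] ω = TB^[i] ω := by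
        have hAne : (Af i : ℝ) ≠ 0 := by
          have := hAf i; positivity
        rcases mul_eq_zero.mp hfac with h | h
        · exact absurd h hAne
        rcases mul_eq_zero.mp h with h | h
        · linarith [sub_eq_zero.mp h]
        · exfalso
          have := sub_eq_zero.mp h
          have h1 := hiter j
          have h2 := (hall i).2
          rw [this] at h1
          linarith
      -- now use injectivity
      have hred : Red ω := ⟨hω, ωs, hconj', hs0, hs1⟩
      have hredj : Red (TB^[j-i] ω) := red_iter ω hred (j-i)
      have hiterj : TB^[i] (TB^[j-i] ω) = TB^[i] ω := by
        rw [← Function.iterate_add_apply]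
        rw [show i + (j - i) = j by omega]
        exact hwj
      have := iter_inj i (TB^[j-i] ω) ω hredj hred hiterj
      exact ⟨j - i, by omega, this⟩
    rcases lt_trichotomy i j with h | h | h
    · exact main i j h heq
    · exact absurd h hij
    · exact main j i h heq.symm
  · -- periodic → reduced
    rintro ⟨n, hn1, hper⟩
    -- s n = ωs
    have hsn : ∀ K, TB^[K * n] ω = ω := by
      intro K
      rw [mul_comm, Function.iterate_mul]
      exact Function.iterate_fixed hper K
    have hseq_at : ∀ K, sSeq ω ωs (K * n) = ωs := by
      intro K
      have hdat := (hinv (K * n)).2.2.1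
      obtain ⟨A, B, C, hA, hg, h1, h2, -⟩ := hdat
      have hpairK : IsConjPair (TB^[K * n] ω) (sSeq ω ωs (K * n)) :=
        ⟨(hinv (K * n)).2.1, A, B, C, hA, hg, h1, h2, (hinv (K * n)).2.2.2⟩
      rw [hsn K] at hpairK
      exact conj_unique ω _ _ hpairK hconj'
    -- not all steps bad
    have hgood : ∃ m < n, sSeq ω ωs m < ((1+⌊TB^[m] ω⌋:ℤ):ℝ) - 1 ∨
        ((1+⌊TB^[m] ω⌋:ℤ):ℝ) < sSeq ω ωs m := by
      by_contra hbad
      push_neg at hbad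
      -- then all conjugates are in the bad band, distances grow
      have hband : ∀ m < n, ((1+⌊TB^[m] ω⌋:ℤ):ℝ) - 1 < sSeq ω ωs m ∧
          sSeq ω ωs m < ((1+⌊TB^[m] ω⌋:ℤ):ℝ) := by
        intro m hm
        obtain ⟨hb1, hb2⟩ := hbad m hm
        have hsirr : Irrational (sSeq ω ωs m) := by
          apply conj_irrational (TB^[m] ω)
          obtain ⟨A, B, C, hA, hg, h1, h2, -⟩ := (hinv m).2.2.1
          exact ⟨(hinv m).2.1, A, B, C, hA, hg, h1, h2, (hinv m).2.2.2⟩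
        constructor
        · rcases lt_or_eq_of_le hb1 with h | h
          · exact h
          · exfalso
            apply hsirr
            exact ⟨((1+⌊TB^[m] ω⌋:ℤ):ℚ) - 1, by push_cast; push_cast at h; linarith⟩
        · rcases lt_or_eq_of_le hb2 with h | h
          · exact h
          · exfalso
            apply hsirr
            exact ⟨((1+⌊TB^[m] ω⌋:ℤ):ℚ), by push_cast; push_cast at h; linarith⟩
      have hgrow : ∀ m < n, |TB^[m] ω - sSeq ω ωs m| < |TB^[m+1] ω - sSeq ω ωs (m+1)| := by
        intro m hm
        set a : ℤ := 1 + ⌊TB^[m] ω⌋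
        have hgw1 : (0:ℝ) < (a:ℝ) - TB^[m] ω := gap_pos _ (hinv m).2.1
        have hgw2 : (a:ℝ) - TB^[m] ω < 1 := gap_lt_one _ (hinv m).2.1
        have hgs1 : (0:ℝ) < (a:ℝ) - sSeq ω ωs m := by linarith [(hband m hm).2]
        have hgs2 : (a:ℝ) - sSeq ω ωs m < 1 := by linarith [(hband m hm).1]
        have hwnext : TB^[m+1] ω = 1/((a:ℝ) - TB^[m] ω) := by
          rw [Function.iterate_succ_apply', TB]
        have hsnext : sSeq ω ωs (m+1) = 1/((a:ℝ) - sSeq ω ωs m) := rfl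
        have hdiff : TB^[m+1] ω - sSeq ω ωs (m+1) =
            (TB^[m] ω - sSeq ω ωs m) / (((a:ℝ) - TB^[m] ω) * ((a:ℝ) - sSeq ω ωs m)) := by
          rw [hwnext, hsnext]
          field_simp
          ring
        have hdpos : 0 < |TB^[m] ω - sSeq ω ωs m| := by
          rw [abs_pos]
          intro h
          exact (hinv m).2.2.2 (by linarith [sub_eq_zero.mp h])
        rw [hdiff, abs_div]
        rw [abs_of_pos (mul_pos hgw1 hgs1)]
        rw [lt_div_iff₀ (mul_pos hgw1 hgs1)]
        have hplt : ((a:ℝ) - TB^[m] ω) * ((a:ℝ) - sSeq ω ωs m) < 1 := by nlinarith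
        have hmul := mul_lt_mul_of_pos_left hplt hdpos
        linarith [hmul]
      have hchain : ∀ m, m ≤ n → 1 ≤ m →
          |TB^[0] ω - sSeq ω ωs 0| < |TB^[m] ω - sSeq ω ωs m| := by
        intro m
        induction m with
        | zero => intro _ h1; omega
        | succ k ih =>
          intro hle h1
          rcases Nat.eq_zero_or_pos k with hk | hk
          · subst hk
            exact hgrow 0 (by omega)
          · exact lt_trans (ih (by omega) (by omega)) (hgrow k (by omega))
      have hfinal := hchain n le_rfl hn1
      have e1 : TB^[n] ω = TB^[0] ω := by simpa using hper
      have e2 : sSeq ω ωs n = sSeq ω ωs 0 := by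
        have := hseq_at 1
        rw [one_mul] at this; exact this
      rw [e1, e2] at hfinal
      exact lt_irrefl _ hfinal
    obtain ⟨m, hmn, hcase⟩ := hgood
    -- get some M with sSeq in (0,1)
    have hM : ∃ M, 0 < sSeq ω ωs M ∧ sSeq ω ωs M < 1 := by
      rcases hcase with h | h
      · exact ⟨m+1, next_in01 ω ωs m h⟩
      · -- sSeq (m+1) < 0, then (m+2) works
        have hneg : sSeq ω ωs (m+1) < 0 := by
          have : ((1+⌊TB^[m] ω⌋:ℤ):ℝ) - sSeq ω ωs m < 0 := by linarith
          show 1 / (((1+⌊TB^[m] ω⌋:ℤ):ℝ) - sSeq ω ωs m) < 0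
          exact div_neg_of_pos_of_neg one_pos this
        refine ⟨m+2, next_in01 ω ωs (m+1) ?_⟩
        have hfl := floor_ge_one _ (hiter (m+1))
        have : (1:ℝ) ≤ (⌊TB^[m+1] ω⌋:ℝ) := by exact_mod_cast hfl
        push_cast
        linarith
    obtain ⟨M, hM01⟩ := hM
    -- pick K with K * n ≥ M
    have hKn : M ≤ (M+1) * n := by nlinarith
    have := pers ω ωs hω hiter M hM01 ((M+1)*n - M)
    rw [show M + ((M+1)*n - M) = (M+1)*n by omega] at this
    rw [hseq_at (M+1)] at this
    exact this
end
end

section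
/- Let u > 1 be irrational, and define its BCF convergents by p₀=1, q₀=0, p₁=a₁, q₁=1, and p_k = a_k p_{k−1} − p_{k−2}, q_k = a_k q_{k−1} − q_{k−2} for k ≥ 2, where a_k = 1 + ⌊T_B^{k−1}(u)⌋. Let σ = (p′, −p; q′, −q) be a matrix in SL(2,ℤ) with integer entries. Then the conditions p′ > q′ > q > 0, p′ > p > q, p′ − q′u > 0, and (p − qu)/(p′ − q′u) > 1 hold if and only if there exists n ≥ 2 with p′ = pₙ, q′ = qₙ, p = p_{n−1}, q = q_{n−1} (i.e., p′/q′ and p/q are consecutive BCF convergents of u). -/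
noncomputable section

lemma TB_step {x : ℝ} (hx : 1 < x) (hi : Irrational x) :
    1 < TB x ∧ Irrational (TB x) := by
  have hfl : (⌊x⌋ : ℝ) ≠ x := by
    intro h; exact hi ⟨⌊x⌋, by exact_mod_cast h⟩
  have h1 : x - ⌊x⌋ < 1 := by
    have := Int.sub_one_lt_floor x; linarith [Int.floor_le x, (Int.fract_lt_one x)]
  have h0 : (0:ℝ) < (1 + ⌊x⌋ : ℤ) - x := by
    push_cast
    have := Int.lt_floor_add_one x
    linarith
  have h2 : ((1 + ⌊x⌋ : ℤ) : ℝ) - x < 1 := by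
    push_cast
    have := Int.floor_le x
    have : (⌊x⌋ : ℝ) < x := lt_of_le_of_ne this hfl
    linarith
  constructor
  · rw [TB]
    rw [lt_div_iff₀ h0]
    linarith
  · rw [TB]
    have h3 : Irrational (((1 + ⌊x⌋ : ℤ) : ℝ) - x) := by
      have := (hi.neg).intCast_add (1 + ⌊x⌋)
      convert this using 1
      exact sub_eq_add_neg _ _
    simpa [one_div] using h3.inv

lemma TB_iter (u : ℝ) (hu : 1 < u) (hirr : Irrational u) (k : ℕ) :
    1 < TB^[k] u ∧ Irrational (TB^[k] u) := by
  induction k with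
  | zero => exact ⟨hu, hirr⟩
  | succ k ih =>
    rw [Function.iterate_succ_apply']
    exact TB_step ih.1 ih.2

section Conv

variable (u : ℝ) (hu : 1 < u) (hirr : Irrational u)
    (p q : ℕ → ℤ)
    (hp0 : p 0 = 1) (hq0 : q 0 = 0) (hp1 : p 1 = 1 + ⌊u⌋) (hq1 : q 1 = 1)
    (hp : ∀ k, 2 ≤ k → p k = (1 + ⌊TB^[k - 1] u⌋) * p (k - 1) - p (k - 2))
    (hq : ∀ k, 2 ≤ k → q k = (1 + ⌊TB^[k - 1] u⌋) * q (k - 1) - q (k - 2))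

include hu hirr hp0 hq0 hp1 hq1 hp hq

lemma beta_rel : ∀ k : ℕ, (p k : ℝ) - q k * u
    = TB^[k+1] u * ((p (k+1) : ℝ) - q (k+1) * u) := by
  have hp' : ∀ m : ℕ, p (m+2) = (1 + ⌊TB^[m+1] u⌋) * p (m+1) - p m :=
    fun m => hp (m+2) (by omega)
  have hq' : ∀ m : ℕ, q (m+2) = (1 + ⌊TB^[m+1] u⌋) * q (m+1) - q m :=
    fun m => hq (m+2) (by omega)
  intro k
  induction k with
  | zero =>
    have hne : (1:ℝ) + ⌊u⌋ - u ≠ 0 := by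
      intro h0
      exact hirr ⟨(1 + ⌊u⌋ : ℤ), by push_cast; linarith⟩
    rw [Function.iterate_one, hp0, hq0, hp1, hq1, TB]
    push_cast
    rw [div_mul_eq_mul_div, eq_div_iff hne]
    ring
  | succ k ih =>
    set w := TB^[k+1] u with hw
    have hwi : Irrational w := (TB_iter u hu hirr (k+1)).2
    have hne : (1:ℝ) + ⌊w⌋ - w ≠ 0 := by
      intro h0
      exact hwi ⟨(1 + ⌊w⌋ : ℤ), by push_cast; linarith⟩
    have hit : TB^[k+2] u = TB w := by
      rw [hw, Function.iterate_succ_apply']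
    rw [hit, TB, hp' k, hq' k]
    push_cast
    rw [div_mul_eq_mul_div, eq_div_iff hne]
    linear_combination ih

omit hp0 hq0 hp1 hq1 hp hq in
lemma floor_ge (k : ℕ) : 2 ≤ 1 + ⌊TB^[k] u⌋ := by
  have h := (TB_iter u hu hirr k).1
  have : (1:ℤ) ≤ ⌊TB^[k] u⌋ := Int.le_floor.2 (by exact_mod_cast h.le)
  omega

lemma beta_pos : ∀ k : ℕ, 0 < (p k : ℝ) - q k * u := by
  intro k
  induction k with
  | zero => rw [hp0, hq0]; norm_num
  | succ k ih =>
    have heq := beta_rel u hu hirr p q hp0 hq0 hp1 hq1 hp hq k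
    have hw := (TB_iter u hu hirr (k+1)).1
    by_contra h
    push_neg at h
    nlinarith

lemma beta_lt (k : ℕ) :
    (p (k+1) : ℝ) - q (k+1) * u < (p k : ℝ) - q k * u := by
  have heq := beta_rel u hu hirr p q hp0 hq0 hp1 hq1 hp hq k
  have hw := (TB_iter u hu hirr (k+1)).1
  have hpos := beta_pos u hu hirr p q hp0 hq0 hp1 hq1 hp hq (k+1)
  nlinarith

lemma q_bounds : ∀ k : ℕ, 0 ≤ q k ∧ q k + 1 ≤ q (k+1) := by
  have hq' : ∀ m : ℕ, q (m+2) = (1 + ⌊TB^[m+1] u⌋) * q (m+1) - q m :=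
    fun m => hq (m+2) (by omega)
  intro k
  induction k with
  | zero => rw [hq0, hq1]; omega
  | succ k ih =>
    obtain ⟨h0, h1⟩ := ih
    have ha := floor_ge u hu hirr (k+1)
    constructor
    · omega
    · nlinarith [hq' k]

lemma p_bounds : ∀ k : ℕ, 1 ≤ p k ∧ p k + 1 ≤ p (k+1) := by
  have hp' : ∀ m : ℕ, p (m+2) = (1 + ⌊TB^[m+1] u⌋) * p (m+1) - p m :=
    fun m => hp (m+2) (by omega)
  intro k
  induction k with
  | zero =>
    rw [hp0, hp1]
    have h1u : (1:ℤ) ≤ ⌊u⌋ := Int.le_floor.2 (by exact_mod_cast hu.le)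
    omega
  | succ k ih =>
    obtain ⟨h0, h1⟩ := ih
    have ha := floor_ge u hu hirr (k+1)
    constructor
    · omega
    · nlinarith [hp' k]

lemma d_bounds : ∀ k : ℕ, 1 ≤ p k - q k ∧ p k - q k ≤ p (k+1) - q (k+1) := by
  have hp' : ∀ m : ℕ, p (m+2) = (1 + ⌊TB^[m+1] u⌋) * p (m+1) - p m :=
    fun m => hp (m+2) (by omega)
  have hq' : ∀ m : ℕ, q (m+2) = (1 + ⌊TB^[m+1] u⌋) * q (m+1) - q m :=
    fun m => hq (m+2) (by omega)
  intro k
  induction k with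
  | zero =>
    rw [hp0, hp1, hq0, hq1]
    have h1u : (1:ℤ) ≤ ⌊u⌋ := Int.le_floor.2 (by exact_mod_cast hu.le)
    omega
  | succ k ih =>
    obtain ⟨h0, h1⟩ := ih
    have ha := floor_ge u hu hirr (k+1)
    constructor
    · omega
    · nlinarith [hp' k, hq' k]

lemma keyE : ∀ (k : ℕ) (p' q' pp qq : ℤ), q' ≤ (k:ℤ) → 0 ≤ qq → qq < q' →
    pp * q' - p' * qq = 1 → 0 < (p':ℝ) - q' * u →
    (p':ℝ) - q' * u < (pp:ℝ) - qq * u →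
    ∃ n : ℕ, 1 ≤ n ∧ p' = p n ∧ q' = q n ∧ pp = p (n-1) ∧ qq = q (n-1) := by
  intro k
  induction k with
  | zero => intro p' q' pp qq hk h0 h1 _ _ _; omega
  | succ k IH =>
    intro p' q' pp qq hk h0 h1 hdet hb1 hb2
    rcases eq_or_lt_of_le h0 with h0 | h0
    · -- base case: qq = 0
      have hqq : qq = 0 := h0.symm
      subst hqq
      have hq'pos : 0 < q' := h1
      have hq1' : q' = 1 := by
        have hun : IsUnit q' := IsUnit.of_mul_eq_one (a := q') pp (by linarith)
        rcases Int.isUnit_iff.1 hun with h | h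
        · exact h
        · omega
      have hpp1 : pp = 1 := by
        rw [hq1'] at hdet; omega
      subst hq1'; subst hpp1
      -- now 0 < p' - u < 1, so p' = 1 + ⌊u⌋
      have h5 : (⌊u⌋ : ℤ) = p' - 1 := by
        apply Int.floor_eq_iff.2
        constructor
        · push_cast
          push_cast at hb2
          linarith
        · push_cast
          push_cast at hb1
          linarith
      refine ⟨1, le_refl 1, ?_, ?_, ?_, ?_⟩
      · rw [hp1]; omega
      · rw [hq1]
      · rw [hp0]
      · rw [hq0]
    · -- descent: qq ≥ 1
      set a : ℤ := (q' - 1) / qq + 1 with ha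
      set P : ℤ := a * pp - p' with hP
      set Q : ℤ := a * qq - q' with hQ
      have hdm := Int.mul_ediv_add_emod (q' - 1) qq
      have hm0 := Int.emod_nonneg (q' - 1) (by omega : qq ≠ 0)
      have hm1 := Int.emod_lt_of_pos (q' - 1) h0
      have hQ0 : 0 ≤ Q := by rw [hQ, ha]; nlinarith
      have hQlt : Q < qq := by rw [hQ, ha]; nlinarith
      have ha2 : 2 ≤ a := by
        have : 1 ≤ (q' - 1) / qq := Int.le_ediv_iff_mul_le h0 |>.2 (by omega)
        omega
      have hdet2 : P * qq - pp * Q = 1 := by rw [hP, hQ]; ring_nf; linarith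
      have hbQ : (pp:ℝ) - qq * u < (P:ℝ) - Q * u := by
        have hexp : (P:ℝ) - Q * u = a * ((pp:ℝ) - qq * u) - ((p':ℝ) - q' * u) := by
          rw [hP, hQ]; push_cast; ring
        have ha2' : (2:ℝ) ≤ (a:ℝ) := by exact_mod_cast ha2
        have hppos : 0 < (pp:ℝ) - qq * u := lt_trans hb1 hb2
        nlinarith
      have hppos : 0 < (pp:ℝ) - qq * u := lt_trans hb1 hb2
      have hkk : qq ≤ (k:ℤ) := by
        have : (((k:ℕ):ℤ) + 1) = ((k+1 : ℕ) : ℤ) := by push_cast; ring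
        omega
      obtain ⟨m, hm, e1, e2, e3, e4⟩ :=
        IH pp qq P Q hkk hQ0 hQlt hdet2 hppos hbQ
      obtain ⟨j, rfl⟩ : ∃ j, m = j + 1 := ⟨m - 1, by omega⟩
      simp only [Nat.add_sub_cancel] at e3 e4
      -- beta relation at level j+1
      set w := TB^[j+1] u with hw
      have hw1 : 1 < w := (TB_iter u hu hirr (j+1)).1
      have hrel := beta_rel u hu hirr p q hp0 hq0 hp1 hq1 hp hq j
      rw [← hw, ← e1, ← e2, ← e3, ← e4] at hrel
      -- p' - q'u = (a - w)(pp - qq u)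
      have hform : (p':ℝ) - q' * u = ((a:ℝ) - w) * ((pp:ℝ) - qq * u) := by
        have hexp : (P:ℝ) - Q * u = a * ((pp:ℝ) - qq * u) - ((p':ℝ) - q' * u) := by
          rw [hP, hQ]; push_cast; ring
        nlinarith [hrel, hexp]
      have haw0 : 0 < (a:ℝ) - w := by
        by_contra hcon
        push_neg at hcon
        nlinarith
      have haw1 : (a:ℝ) - w < 1 := by
        by_contra hcon
        push_neg at hcon
        nlinarith
      have hfl : ⌊w⌋ = a - 1 := by
        apply Int.floor_eq_iff.2
        constructor
        · push_cast; linarith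
        · push_cast; linarith
      have hpn := hp (j+2) (by omega)
      have hqn := hq (j+2) (by omega)
      have h21 : j+2-1 = j+1 := rfl
      have h22 : j+2-2 = j := rfl
      rw [h21, h22, ← hw, hfl, ← e1, ← e3] at hpn
      rw [h21, h22, ← hw, hfl, ← e2, ← e4] at hqn
      refine ⟨j+2, by omega, ?_, ?_, ?_, ?_⟩
      · rw [hpn, hP]; ring
      · rw [hqn, hQ]; ring
      · simpa using e1
      · simpa using e2

end Conv

theorem stmt16 (u : ℝ) (hu : 1 < u) (hirr : Irrational u)
    (p q : ℕ → ℤ)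
    (hp0 : p 0 = 1) (hq0 : q 0 = 0) (hp1 : p 1 = 1 + ⌊u⌋) (hq1 : q 1 = 1)
    (hp : ∀ k, 2 ≤ k → p k = (1 + ⌊TB^[k - 1] u⌋) * p (k - 1) - p (k - 2))
    (hq : ∀ k, 2 ≤ k → q k = (1 + ⌊TB^[k - 1] u⌋) * q (k - 1) - q (k - 2))
    (p' pp q' qq : ℤ) (hdet : p' * (-qq) - (-pp) * q' = 1) :
    (q' < p' ∧ qq < q' ∧ 0 < qq ∧ pp < p' ∧ qq < pp ∧
        0 < (p' : ℝ) - q' * u ∧ 1 < ((pp : ℝ) - qq * u) / ((p' : ℝ) - q' * u)) ↔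
      ∃ n ≥ 2, p' = p n ∧ q' = q n ∧ pp = p (n - 1) ∧ qq = q (n - 1) := by
  constructor
  · rintro ⟨h1, h2, h3, h4, h5, h6, h7⟩
    have hdet' : pp * q' - p' * qq = 1 := by linarith
    have hb2 : (p':ℝ) - q' * u < (pp:ℝ) - qq * u := by
      have := (one_lt_div h6).1 h7
      linarith
    have hk : q' ≤ ((q'.toNat : ℕ) : ℤ) := by
      rw [Int.toNat_of_nonneg (by omega)]
    obtain ⟨n, hn1, e1, e2, e3, e4⟩ :=
      keyE u hu hirr p q hp0 hq0 hp1 hq1 hp hq q'.toNat p' q' pp qq hk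
        (by omega) h2 hdet' h6 hb2
    refine ⟨n, ?_, e1, e2, e3, e4⟩
    rcases Nat.lt_or_ge n 2 with hn | hn
    · exfalso
      have : n = 1 := by omega
      subst this
      simp only [Nat.sub_self] at e4
      rw [hq0] at e4
      omega
    · exact hn
  · rintro ⟨n, hn2, e1, e2, e3, e4⟩
    obtain ⟨j, rfl⟩ : ∃ j, n = j + 2 := ⟨n - 2, by omega⟩
    have hd1 := d_bounds u hu hirr p q hp0 hq0 hp1 hq1 hp hq (j+1)
    have hd2 := d_bounds u hu hirr p q hp0 hq0 hp1 hq1 hp hq (j+2)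
    have hq1b := q_bounds u hu hirr p q hp0 hq0 hp1 hq1 hp hq j
    have hq2b := q_bounds u hu hirr p q hp0 hq0 hp1 hq1 hp hq (j+1)
    have hp2b := p_bounds u hu hirr p q hp0 hq0 hp1 hq1 hp hq (j+1)
    have hbp := beta_pos u hu hirr p q hp0 hq0 hp1 hq1 hp hq (j+2)
    have hbl := beta_lt u hu hirr p q hp0 hq0 hp1 hq1 hp hq (j+1)
    simp only [show j+1+1 = j+2 from rfl] at hd1 hq2b hp2b hbl
    have h21 : j+2-1 = j+1 := rfl
    rw [h21] at e3 e4
    subst e1; subst e2; subst e3; subst e4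
    refine ⟨by omega, by omega, by omega, by omega, by omega, hbp, ?_⟩
    exact (one_lt_div hbp).2 hbl
end
end
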